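/- arXiv:1609.01402 — 3 statements merged into one kernel-verified Lean document; each statement's English description precedes it below -/
import Mathlib

section
/- Let G be a finite simple graph, let e be an edge of G, and let G' be the simple graph whose edge ideal is the polarization of the colon ideal (I(G)^2 : e). Then cochord(G') ≤ cochord(G). -/
/-!
Common definitions: edge ideals, Castelnuovo–Mumford regularity (via graded
free resolutions), chordal/co-chordal graphs, co-chordal cover number,
induced matchings, matchings, vertex covers, even-connections and the
polarized colon graph.
-/

open MvPolynomial

namespace RegPowers

/-- The edge ideal `I(G)` of a finite simple graph `G`, inside `k[x_v : v ∈ V]`: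
the ideal generated by the monomials `x_u * x_v` for edges `{u, v}` of `G`. -/
noncomputable def edgeIdeal (k : Type) [Field k] {V : Type} (G : SimpleGraph V) :
    Ideal (MvPolynomial V k) :=
  Ideal.span {m | ∃ u v : V, G.Adj u v ∧ m = X u * X v}

section Regularity

variable {k : Type} [Field k] {V : Type}

/-- A finite graded free resolution of a homogeneous ideal `I` of the polynomial
ring `k[x_v : v ∈ V]`:  free modules `F i = R^(rank i)` with generators of the
internal degrees `deg i`, an augmentation `F 0 → I` given by homogeneous
generators `gen` of `I`, and graded (degree preserving) differentials
`d i : F (i+1) → F i` given by matrices with homogeneous entries, forming an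
exact sequence `0 → F len → ⋯ → F 1 → F 0 → I → 0`. -/
structure GradedFreeResolution (I : Ideal (MvPolynomial V k)) where
  rank : ℕ → ℕ
  deg : (i : ℕ) → Fin (rank i) → ℕ
  len : ℕ
  rank_eq_zero : ∀ i : ℕ, len < i → rank i = 0
  gen : Fin (rank 0) → MvPolynomial V k
  gen_homog : ∀ l : Fin (rank 0), (gen l).IsHomogeneous (deg 0 l)
  gen_span : Ideal.span (Set.range gen) = I
  d : (i : ℕ) → Matrix (Fin (rank i)) (Fin (rank (i + 1))) (MvPolynomial V k)
  d_homog : ∀ (i : ℕ) (a : Fin (rank i)) (b : Fin (rank (i + 1))),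
    d i a b = 0 ∨ ∃ n : ℕ, (d i a b).IsHomogeneous n ∧ deg (i + 1) b = deg i a + n
  exact_zero :
    LinearMap.ker (Fintype.linearCombination (MvPolynomial V k) gen)
      = LinearMap.range (d 0).mulVecLin
  exact_succ : ∀ i : ℕ,
    LinearMap.ker (d i).mulVecLin = LinearMap.range (d (i + 1)).mulVecLin

/-- The Castelnuovo–Mumford regularity of a homogeneous ideal `I` in a polynomial
ring over a field: the least `r` such that `I` admits a (finite) graded free
resolution whose `i`-th free module is generated in degrees `≤ r + i`.
(The minimal graded free resolution realizes this minimum, so this agrees with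
the usual definition `reg I = max { j - i : Tor_i(I, k)_j ≠ 0 }`.) -/
noncomputable def reg (I : Ideal (MvPolynomial V k)) : ℕ :=
  sInf { r : ℕ | ∃ F : GradedFreeResolution I,
    ∀ (i : ℕ) (l : Fin (F.rank i)), F.deg i l ≤ r + i }

/-- A homogeneous ideal has a linear (minimal free) resolution iff it is generated
in a single degree `d` and its Castelnuovo–Mumford regularity equals `d`. -/
def HasLinearResolution (I : Ideal (MvPolynomial V k)) : Prop :=
  ∃ d : ℕ, (∃ S : Set (MvPolynomial V k),
      (∀ f ∈ S, f.IsHomogeneous d) ∧ Ideal.span S = I) ∧ reg I = d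

/-- A quadratic ideal has a linear presentation (i.e. its minimal free resolution
is 1-step linear): it is generated in degree 2 and admits a graded free resolution
whose zeroth free module is generated in degree `2` and whose first free module is
generated in degrees `≤ 3`. -/
def HasLinearPresentation (I : Ideal (MvPolynomial V k)) : Prop :=
  ∃ F : GradedFreeResolution I,
    (∀ l : Fin (F.rank 0), F.deg 0 l = 2) ∧ (∀ l : Fin (F.rank 1), F.deg 1 l ≤ 3)

end Regularity

section Graphs

variable {V : Type}

/-- A graph is chordal if every induced cycle in it has length 3, i.e. it has no
induced cycle of length `≥ 4`. -/
def IsChordal (G : SimpleGraph V) : Prop :=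
  ∀ n : ℕ, 4 ≤ n → IsEmpty (SimpleGraph.cycleGraph n ↪g G)

/-- The co-chordal cover number `cochord(G)`: the least `n` such that there are
`n` subgraphs `H 1, …, H n` of `G`, each with chordal complement, whose edge sets
cover the edge set of `G`. -/
noncomputable def cochord (G : SimpleGraph V) : ℕ :=
  sInf { n : ℕ | ∃ H : Fin n → SimpleGraph V,
    (∀ i, H i ≤ G ∧ IsChordal (H i)ᶜ) ∧ (⨆ i, H i) = G }

/-- The data `(u i, v i)`, `i < n`, is an induced matching of `G` of size `n`:
the edges `{u i, v i}` are edges of `G`, pairwise vertex disjoint, and the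
subgraph induced on their endpoints contains no other edges. -/
def IsInducedMatching (G : SimpleGraph V) {n : ℕ} (u v : Fin n → V) : Prop :=
  (∀ i, G.Adj (u i) (v i)) ∧
  ∀ i j, i ≠ j →
    (u i ≠ u j ∧ u i ≠ v j ∧ v i ≠ u j ∧ v i ≠ v j) ∧
    (¬ G.Adj (u i) (u j) ∧ ¬ G.Adj (u i) (v j) ∧
      ¬ G.Adj (v i) (u j) ∧ ¬ G.Adj (v i) (v j))

/-- The induced matching number `ν(G)`: the maximum size of an induced matching. -/
noncomputable def inducedMatchingNumber (G : SimpleGraph V) : ℕ :=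
  sSup { n : ℕ | ∃ u v : Fin n → V, IsInducedMatching G u v }

/-- `M` is a maximal matching of `G`: a set of pairwise disjoint edges of `G`
such that every edge of `G` meets an edge of `M`. -/
def IsMaximalMatching (G : SimpleGraph V) (M : Finset (Sym2 V)) : Prop :=
  (↑M ⊆ G.edgeSet) ∧
  ((M : Set (Sym2 V)).Pairwise fun e f => ∀ x : V, x ∈ e → x ∉ f) ∧
  ∀ e ∈ G.edgeSet, ∃ f ∈ M, ∃ x : V, x ∈ e ∧ x ∈ f

/-- The minimum matching number `β(G)`: the least cardinality of a maximal
matching of `G`. -/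
noncomputable def minMatchingNumber (G : SimpleGraph V) : ℕ :=
  sInf { n : ℕ | ∃ M : Finset (Sym2 V), IsMaximalMatching G M ∧ M.card = n }

/-- `(X, Y)` is a bipartition of `G`. -/
def IsBipartition (G : SimpleGraph V) (X Y : Finset V) : Prop :=
  Disjoint X Y ∧ (∀ v : V, v ∈ X ∨ v ∈ Y) ∧
    ∀ u v : V, G.Adj u v → (u ∈ X ∧ v ∈ Y) ∨ (u ∈ Y ∧ v ∈ X)

/-- `G` is bipartite. -/
def IsBipartite (G : SimpleGraph V) : Prop :=
  ∃ X Y : Finset V, IsBipartition G X Y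

/-- `C` is a vertex cover of `G`. -/
def IsVertexCover (G : SimpleGraph V) (C : Finset V) : Prop :=
  ∀ u v : V, G.Adj u v → u ∈ C ∨ v ∈ C

/-- `C` is a minimal vertex cover of `G`. -/
def IsMinimalVertexCover (G : SimpleGraph V) (C : Finset V) : Prop :=
  IsVertexCover G C ∧ ∀ C' ⊆ C, IsVertexCover G C' → C' = C

/-- `G` is unmixed (well-covered): all minimal vertex covers have the same size. -/
def IsUnmixed (G : SimpleGraph V) : Prop :=
  ∀ C C' : Finset V, IsMinimalVertexCover G C → IsMinimalVertexCover G C' →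
    C.card = C'.card

/-- `G` contains no induced path on `m` vertices. -/
def PathFree (m : ℕ) (G : SimpleGraph V) : Prop :=
  IsEmpty (SimpleGraph.pathGraph m ↪g G)

/-- `G` is weakly chordal: every induced cycle in `G` and in `Gᶜ` has length at
most 4. -/
def IsWeaklyChordal (G : SimpleGraph V) : Prop :=
  ∀ n : ℕ, 5 ≤ n →
    IsEmpty (SimpleGraph.cycleGraph n ↪g G) ∧ IsEmpty (SimpleGraph.cycleGraph n ↪g Gᶜ)

/-- `G` is `nK₂`-free: it has no induced matching of size `n`. -/
def NK2Free (n : ℕ) (G : SimpleGraph V) : Prop :=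
  ¬ ∃ u v : Fin n → V, IsInducedMatching G u v

/-- The whiskered graph `W(H)` of `H`: a pendant vertex is attached to every
vertex of `H` (the second copy of the vertex set consists of the pendant
vertices). -/
def whisker (H : SimpleGraph V) : SimpleGraph (V ⊕ V) :=
  SimpleGraph.fromRel fun a b =>
    match a, b with
    | Sum.inl u, Sum.inl v => H.Adj u v
    | Sum.inl u, Sum.inr v => u = v
    | _, _ => False

end Graphs

section EvenConnection

variable {V : Type} [DecidableEq V]

/-- `u` and `v` (possibly equal) are even-connected in `G` with respect to the
`s`-fold product `e 0 ⋯ e (s-1)` of edges of `G`: there is a walk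
`p 0, p 1, …, p (2m+1)` in `G` with `m ≥ 1` from `u` to `v` such that every
even-indexed edge `{p (2l+1), p (2l+2)}` is one of the `e i`, and each `e i` is
used at most as many times as it occurs in the list `e`. -/
def EvenConnected (G : SimpleGraph V) {s : ℕ} (e : Fin s → V × V) (u v : V) : Prop :=
  ∃ (m : ℕ) (p : ℕ → V), 1 ≤ m ∧ p 0 = u ∧ p (2 * m + 1) = v ∧
    (∀ r : ℕ, r < 2 * m + 1 → G.Adj (p r) (p (r + 1))) ∧
    (∀ l : ℕ, l < m → ∃ i : Fin s,
      Sym2.mk (p (2 * l + 1)) (p (2 * l + 2)) = Sym2.mk (e i).1 (e i).2) ∧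
    ∀ i : Fin s,
      ((Finset.range m).filter fun l =>
          Sym2.mk (p (2 * l + 1)) (p (2 * l + 2)) = Sym2.mk (e i).1 (e i).2).card ≤
        (Finset.univ.filter fun j : Fin s => Sym2.mk (e j).1 (e j).2 = Sym2.mk (e i).1 (e i).2).card

/-- The graph `G'` associated to the polarization of the colon ideal
`(I(G)^(s+1) : e 0 ⋯ e (s-1))` (by Banerjee's description of its quadratic
generators): its edges are the edges of `G`, the pairs `{u, v}` of distinct
vertices that are even-connected with respect to `e 0 ⋯ e (s-1)`, and, for every
vertex `u` even-connected to itself, an edge from `u` to the new vertex `u'`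
introduced by polarizing `x_u ^ 2`. -/
def polarGraph (G : SimpleGraph V) {s : ℕ} (e : Fin s → V × V) :
    SimpleGraph (V ⊕ V) :=
  SimpleGraph.fromRel fun a b =>
    match a, b with
    | Sum.inl u, Sum.inl v => G.Adj u v ∨ EvenConnected G e u v
    | Sum.inl u, Sum.inr v => u = v ∧ EvenConnected G e u u
    | _, _ => False

end EvenConnection

end RegPowers

namespace CochordAux

open SimpleGraph Sum
open Fin.NatCast Fin.CommRing

lemma cyc_nonadj {n : ℕ} [NeZero n] (hn : 4 ≤ n) (x : Fin n) (d : ℕ) (h2 : 2 ≤ d)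
    (hd : d ≤ n - 2) :
    x + (d : Fin n) ≠ x ∧ ¬ (SimpleGraph.cycleGraph n).Adj x (x + (d : Fin n)) := by
  have hdn : d < n := by omega
  have hval : ((d : Fin n)).val = d := Fin.val_cast_of_lt hdn
  have hsub : (x + (d : Fin n)) - x = (d : Fin n) := add_sub_cancel_left x _
  have hneg : (x - (x + (d : Fin n))).val = n - d := by
    have h : x - (x + (d : Fin n)) = -(d : Fin n) := by ring
    rw [h, Fin.neg_def]
    simp only [hval]
    simp [Nat.mod_eq_of_lt (by omega : n - d < n)]
  constructor
  · intro h
    have h2' := congrArg Fin.val hsub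
    rw [h] at h2'
    simp [hval] at h2'
    omega
  · rw [SimpleGraph.cycleGraph_adj']
    push_neg
    constructor
    · rw [hneg]; omega
    · rw [hsub, hval]; omega

lemma cyc_adj_succ {n : ℕ} [NeZero n] (hn : 2 ≤ n) (x : Fin n) :
    (SimpleGraph.cycleGraph n).Adj x (x + 1) := by
  rw [SimpleGraph.cycleGraph_adj']
  right
  rw [add_sub_cancel_left]
  exact Fin.val_one' n |>.trans (Nat.mod_eq_of_lt (by omega))

end CochordAux

namespace CochordAux
open SimpleGraph Sum RegPowers
open Fin.NatCast Fin.CommRing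

variable {V : Type} [DecidableEq V]

lemma ec_iff (G : SimpleGraph V) (a b : V) (hab : G.Adj a b) (u v : V) :
    EvenConnected G (fun _ : Fin 1 => (a, b)) u v ↔
      (G.Adj a u ∧ G.Adj b v) ∨ (G.Adj b u ∧ G.Adj a v) := by
  constructor
  · rintro ⟨m, p, h1, hp0, hpl, hadj, hmk, hcount⟩
    have hfilt : (Finset.range m).filter
        (fun l => Sym2.mk (p (2 * l + 1)) (p (2 * l + 2)) =
          Sym2.mk ((fun _ : Fin 1 => (a, b)) (0 : Fin 1)).1
            ((fun _ : Fin 1 => (a, b)) (0 : Fin 1)).2) = Finset.range m := by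
      apply Finset.filter_true_of_mem
      intro l hl
      obtain ⟨i, hi⟩ := hmk l (Finset.mem_range.mp hl)
      exact hi
    have hm : m = 1 := by
      have hle : m ≤ 1 := by
        calc m = ((Finset.range m).filter _).card := by rw [hfilt, Finset.card_range]
        _ ≤ _ := hcount 0
        _ ≤ (Finset.univ : Finset (Fin 1)).card := Finset.card_filter_le _ _
        _ = 1 := by simp
      omega
    subst hm
    obtain ⟨i, hi⟩ := hmk 0 (by omega)
    simp only at hi
    have hadj0 : G.Adj (p 0) (p 1) := hadj 0 (by omega)
    have hadj2 : G.Adj (p 2) (p 3) := hadj 2 (by omega)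
    rw [hp0] at hadj0
    have hp3 : p 3 = v := by simpa using hpl
    rw [hp3] at hadj2
    rw [Sym2.eq_iff] at hi
    rcases hi with ⟨h1', h2'⟩ | ⟨h1', h2'⟩
    · left
      exact ⟨by rw [h1'] at hadj0; exact hadj0.symm, by rw [h2'] at hadj2; exact hadj2⟩
    · right
      exact ⟨by rw [h1'] at hadj0; exact hadj0.symm, by rw [h2'] at hadj2; exact hadj2⟩
  · intro h
    obtain ⟨x, y, hxy, hux, hyv, hcase⟩ : ∃ x y, G.Adj x y ∧ G.Adj u x ∧ G.Adj y v ∧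
        ((x = a ∧ y = b) ∨ (x = b ∧ y = a)) := by
      rcases h with ⟨h1', h2'⟩ | ⟨h1', h2'⟩
      · exact ⟨a, b, hab, h1'.symm, h2', Or.inl ⟨rfl, rfl⟩⟩
      · exact ⟨b, a, hab.symm, h1'.symm, h2', Or.inr ⟨rfl, rfl⟩⟩
    refine ⟨1, fun r => if r = 0 then u else if r = 1 then x else if r = 2 then y else v,
      le_refl 1, by simp, by norm_num, ?_, ?_, ?_⟩
    · intro r hr
      interval_cases r <;> simpa
    · intro l hl
      have : l = 0 := by omega
      subst this
      refine ⟨0, ?_⟩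
      simp only []
      norm_num
      try rw [Sym2.eq_iff]
      tauto
    · intro i
      calc _ ≤ (Finset.range 1).card := Finset.card_filter_le _ _
      _ = 1 := by simp
      _ ≤ _ := by
        have : (Finset.univ.filter fun j : Fin 1 =>
            Sym2.mk ((fun _ : Fin 1 => (a, b)) j).1 ((fun _ : Fin 1 => (a, b)) j).2 =
              Sym2.mk ((fun _ : Fin 1 => (a, b)) i).1 ((fun _ : Fin 1 => (a, b)) i).2) =
            Finset.univ := by
          apply Finset.filter_true_of_mem
          intro j _
          rfl
        rw [this]
        simp

end CochordAux

namespace CochordAux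
open SimpleGraph Sum RegPowers
open Fin.NatCast Fin.CommRing

variable {V : Type}

/-- the "even pair" relation for a single edge (a,b) -/
def EP (G : SimpleGraph V) (a b u v : V) : Prop :=
  (G.Adj a u ∧ G.Adj b v) ∨ (G.Adj b u ∧ G.Adj a v)

lemma EP_symm {G : SimpleGraph V} {a b u v : V} (h : EP G a b u v) : EP G a b v u := by
  rcases h with ⟨h1, h2⟩ | ⟨h1, h2⟩
  · exact Or.inr ⟨h2, h1⟩
  · exact Or.inl ⟨h2, h1⟩

/-- the star at a vertex -/
def starG (G : SimpleGraph V) (v : V) : SimpleGraph V :=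
  SimpleGraph.fromRel fun x y => x = v ∧ G.Adj v y

lemma starG_adj (G : SimpleGraph V) (v x y : V) :
    (starG G v).Adj x y ↔ x ≠ y ∧ ((x = v ∧ G.Adj v y) ∨ (y = v ∧ G.Adj v x)) := by
  simp [starG, SimpleGraph.fromRel_adj]

/-- copy of a graph on the left summand -/
def inlG (H : SimpleGraph V) : SimpleGraph (V ⊕ V) :=
  SimpleGraph.fromRel fun x y =>
    match x, y with
    | inl u, inl v => H.Adj u v
    | _, _ => False

lemma inlG_adj_ll (H : SimpleGraph V) (u v : V) :
    (inlG H).Adj (inl u) (inl v) ↔ H.Adj u v := by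
  rw [inlG, SimpleGraph.fromRel_adj]
  constructor
  · rintro ⟨hne, h | h⟩
    · exact h
    · exact h.symm
  · intro h
    exact ⟨by simpa using h.ne, Or.inl h⟩

lemma inlG_not_adj_r (H : SimpleGraph V) (u : V) (z : V ⊕ V) :
    ¬ (inlG H).Adj (inr u) z := by
  rw [inlG, SimpleGraph.fromRel_adj]
  rintro ⟨hne, h | h⟩
  · cases z <;> exact h
  · cases z <;> exact h

/-- the polarized-colon graph piece associated to the distinguished part -/
def KjG (G H : SimpleGraph V) (a b : V) : SimpleGraph (V ⊕ V) :=
  SimpleGraph.fromRel fun x y =>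
    match x, y with
    | inl u, inl v => H.Adj u v ∨ EP G a b u v
    | inl u, inr v => u = v ∧ G.Adj a u ∧ G.Adj b u
    | _, _ => False

lemma KjG_adj_ll (G H : SimpleGraph V) (a b u v : V) :
    (KjG G H a b).Adj (inl u) (inl v) ↔ u ≠ v ∧ (H.Adj u v ∨ EP G a b u v) := by
  rw [KjG, SimpleGraph.fromRel_adj]
  constructor
  · rintro ⟨hne, h | h⟩
    · exact ⟨by simpa using hne, h⟩
    · refine ⟨by simpa using hne, ?_⟩
      rcases h with h | h
      · exact Or.inl h.symm
      · exact Or.inr (EP_symm h)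
  · rintro ⟨hne, h⟩
    exact ⟨by simpa using hne, Or.inl h⟩

lemma KjG_adj_lr (G H : SimpleGraph V) (a b : V) (u v : V) :
    (KjG G H a b).Adj (inl u) (inr v) ↔ u = v ∧ G.Adj a u ∧ G.Adj b u := by
  rw [KjG, SimpleGraph.fromRel_adj]
  constructor
  · rintro ⟨hne, h | h⟩
    · exact h
    · exact h.elim
  · intro h
    exact ⟨by simp, Or.inl h⟩

lemma KjG_adj_rl (G H : SimpleGraph V) (a b : V) (u v : V) :
    (KjG G H a b).Adj (inr u) (inl v) ↔ v = u ∧ G.Adj a v ∧ G.Adj b v := by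
  rw [SimpleGraph.adj_comm, KjG_adj_lr]

lemma KjG_not_adj_rr (G H : SimpleGraph V) (a b : V) (u v : V) :
    ¬ (KjG G H a b).Adj (inr u) (inr v) := by
  rw [KjG, SimpleGraph.fromRel_adj]
  rintro ⟨hne, h | h⟩ <;> exact h

end CochordAux

namespace CochordAux
open SimpleGraph Sum RegPowers
open Fin.NatCast Fin.CommRing

variable {V : Type}

lemma add_cast_ne {n : ℕ} [NeZero n] (k : Fin n) (d : ℕ) (h0 : 0 < d) (h : d < n) :
    k + (d : Fin n) ≠ k := by
  intro h'
  have h2 : (d : Fin n) = 0 := by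
    have := congrArg (fun z => z - k) h'
    simpa [add_comm, add_sub_cancel_right, sub_self] using this
  have := congrArg Fin.val h2
  rw [Fin.val_cast_of_lt h] at this
  simp at this
  omega

/-- from an embedding of a long cycle into a complement graph, cycle-distant
positions give edges of the original graph. -/
lemma emb_far {n : ℕ} [NeZero n] (hn : 4 ≤ n) {W : Type} {X : SimpleGraph W}
    (f : SimpleGraph.cycleGraph n ↪g Xᶜ) (k : Fin n) (d : ℕ) (h2 : 2 ≤ d) (hd : d ≤ n - 2) :
    X.Adj (f k) (f (k + (d : Fin n))) := by
  obtain ⟨hne, hnadj⟩ := cyc_nonadj hn k d h2 hd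
  have h1 : ¬ Xᶜ.Adj (f k) (f (k + (d : Fin n))) := fun h => hnadj (f.map_rel_iff.mp h)
  rw [compl_adj] at h1
  push_neg at h1
  exact h1 (f.injective.ne (Ne.symm hne))

lemma starG_compl_chordal (G : SimpleGraph V) (v : V) : IsChordal (starG G v)ᶜ := by
  intro n hn
  haveI : NeZero n := ⟨by omega⟩
  constructor
  intro f
  have hv : ∀ k : Fin n, ∀ d : ℕ, 2 ≤ d → d ≤ n - 2 →
      f k = v ∨ f (k + (d : Fin n)) = v := by
    intro k d h2 hd
    have := (starG_adj G v _ _).mp (emb_far hn f k d h2 hd)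
    tauto
  obtain ⟨k0, hk0⟩ : ∃ k0, f k0 = v := by
    rcases hv 0 2 le_rfl (by omega) with h | h
    · exact ⟨0, h⟩
    · exact ⟨_, h⟩
  rcases hv (k0 + ((1 : ℕ) : Fin n)) 2 le_rfl (by omega) with h | h
  · exact add_cast_ne k0 1 one_pos (by omega) (f.injective (h.trans hk0.symm))
  · have hpos : k0 + ((1 : ℕ) : Fin n) + ((2 : ℕ) : Fin n) = k0 + ((3 : ℕ) : Fin n) := by
      push_cast
      ring
    rw [hpos] at h
    exact add_cast_ne k0 3 (by omega) (by omega) (f.injective (h.trans hk0.symm))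

lemma no_far_edge (G H : SimpleGraph V) (hH : H ≤ G) (hc : IsChordal Hᶜ) {a b x y : V}
    (hab : H.Adj a b) (hxy : H.Adj x y) (hax : ¬ G.Adj a x) (hbx : ¬ G.Adj b x)
    (hay : ¬ G.Adj a y) (hby : ¬ G.Adj b y) : False := by
  have hxa : x ≠ a := by rintro rfl; exact hay (hH hxy)
  have hxb : x ≠ b := by rintro rfl; exact hby (hH hxy)
  have hya : y ≠ a := by rintro rfl; exact hax (hH hxy.symm)
  have hyb : y ≠ b := by rintro rfl; exact hbx (hH hxy.symm)
  have hxyne : x ≠ y := hxy.ne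
  have habne : a ≠ b := hab.ne
  have hax' : a ≠ x := hxa.symm
  have hbx' : b ≠ x := hxb.symm
  have hay' : a ≠ y := hya.symm
  have hby' : b ≠ y := hyb.symm
  have hyx : y ≠ x := hxyne.symm
  have hba : b ≠ a := habne.symm
  have nax : ¬ H.Adj a x := fun h => hax (hH h)
  have nbx : ¬ H.Adj b x := fun h => hbx (hH h)
  have nay : ¬ H.Adj a y := fun h => hay (hH h)
  have nby : ¬ H.Adj b y := fun h => hby (hH h)
  refine (hc 4 le_rfl).false ?_
  refine ⟨⟨![x, a, y, b], ?_⟩, ?_⟩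
  · intro i j hij
    fin_cases i <;> fin_cases j <;> simp_all
  · intro i j
    change Hᶜ.Adj (![x, a, y, b] i) (![x, a, y, b] j) ↔ _
    fin_cases i <;> fin_cases j <;>
      simp_all (config := { decide := true }) [compl_adj, SimpleGraph.adj_comm, ne_comm]

lemma inlG_compl_chordal (H : SimpleGraph V) (hc : IsChordal Hᶜ) :
    IsChordal (inlG H)ᶜ := by
  intro n hn
  haveI : NeZero n := ⟨by omega⟩
  constructor
  intro f
  have hall : ∀ k : Fin n, ∃ u, f k = inl u := by
    intro k
    cases hfk : f k with
    | inl u => exact ⟨u, rfl⟩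
    | inr u =>
      exfalso
      have := emb_far hn f k 2 le_rfl (by omega)
      rw [hfk] at this
      exact inlG_not_adj_r H u _ this
  choose g hg using hall
  have hginj : Function.Injective g := by
    intro k k' h
    apply f.injective
    rw [hg k, hg k', h]
  refine (hc n hn).false ⟨⟨g, hginj⟩, ?_⟩
  intro k k'
  have h2 := f.map_rel_iff (a := k) (b := k')
  rw [hg k, hg k'] at h2
  rw [← h2, compl_adj, compl_adj, inlG_adj_ll]
  simp [Sum.inl_injective.ne_iff]

lemma exists_cover [Fintype V] [DecidableEq V] (G : SimpleGraph V) :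
    ∃ (m : ℕ) (H : Fin m → SimpleGraph V),
      (∀ i, H i ≤ G ∧ IsChordal (H i)ᶜ) ∧ (⨆ i, H i) = G := by
  refine ⟨Fintype.card V, fun i => starG G ((Fintype.equivFin V).symm i),
    fun i => ⟨?_, starG_compl_chordal G _⟩, ?_⟩
  · intro x y h
    rw [starG_adj] at h
    rcases h.2 with ⟨rfl, h'⟩ | ⟨rfl, h'⟩
    · exact h'
    · exact h'.symm
  · ext x y
    rw [iSup_adj]
    constructor
    · rintro ⟨i, hi⟩
      rw [starG_adj] at hi
      rcases hi.2 with ⟨rfl, h'⟩ | ⟨rfl, h'⟩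
      · exact h'
      · exact h'.symm
    · intro h
      refine ⟨Fintype.equivFin V x, ?_⟩
      rw [starG_adj]
      exact ⟨h.ne, Or.inl ⟨(Equiv.symm_apply_apply _ _).symm, by
        rw [Equiv.symm_apply_apply]; exact h⟩⟩

end CochordAux

namespace CochordAux
open SimpleGraph Sum RegPowers
open Fin.NatCast Fin.CommRing

variable {V : Type}

lemma cast_add_pos {n : ℕ} [NeZero n] (k : Fin n) (c d : ℕ) :
    k + ((c : ℕ) : Fin n) + ((d : ℕ) : Fin n) = k + (((c + d : ℕ)) : Fin n) := by
  push_cast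
  ring

lemma Kj_compl_chordal (G H : SimpleGraph V) (a b : V) (hH : H ≤ G)
    (hc : IsChordal Hᶜ) (hab : H.Adj a b) : IsChordal (KjG G H a b)ᶜ := by
  intro n hn
  haveI : NeZero n := ⟨by omega⟩
  constructor
  intro f
  have hFar : ∀ (k : Fin n) (d : ℕ), 2 ≤ d → d ≤ n - 2 →
      (KjG G H a b).Adj (f k) (f (k + (d : Fin n))) :=
    fun k d h2 hd => emb_far hn f k d h2 hd
  by_cases hinr : ∃ (k : Fin n) (u : V), f k = inr u
  · obtain ⟨k, u, hk⟩ := hinr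
    have hz : ∀ z, (KjG G H a b).Adj (inr u) z →
        z = inl u ∧ G.Adj a u ∧ G.Adj b u := by
      intro z hz
      cases z with
      | inl w =>
        rw [KjG_adj_rl] at hz
        obtain ⟨rfl, h1, h2⟩ := hz
        exact ⟨rfl, h1, h2⟩
      | inr w => exact absurd hz (KjG_not_adj_rr G H a b u w)
    have h2 := hFar k 2 le_rfl (by omega)
    rw [hk] at h2
    obtain ⟨hk2, hAu, hBu⟩ := hz _ h2
    by_cases h5 : 5 ≤ n
    · have h3 := hFar k 3 (by omega) (by omega)
      rw [hk] at h3
      have hk3 := (hz _ h3).1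
      have heq : k + ((2 : ℕ) : Fin n) = k + ((3 : ℕ) : Fin n) :=
        f.injective (hk2.trans hk3.symm)
      have heq2 := congrArg Fin.val (add_left_cancel heq)
      rw [Fin.val_cast_of_lt (by omega), Fin.val_cast_of_lt (by omega)] at heq2
      omega
    · have hn4 : n = 4 := by omega
      subst hn4
      obtain ⟨hne13, hnadj13⟩ := cyc_nonadj (le_refl 4) (k + ((1 : ℕ) : Fin 4)) 2 le_rfl (by omega)
      rw [cast_add_pos] at hne13 hnadj13
      simp only [Nat.reduceAdd] at hne13 hnadj13
      -- the two neighbours of the pendant pair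
      have e2 : (KjG G H a b)ᶜ.Adj (f (k + ((1:ℕ) : Fin 4))) (f (k + ((2:ℕ) : Fin 4))) := by
        apply f.map_rel_iff.mpr
        have := cyc_adj_succ (by omega) (k + ((1:ℕ) : Fin 4))
        rw [show (k + ((1:ℕ):Fin 4)) + 1 = k + ((2:ℕ):Fin 4) by
          rw [show (1 : Fin 4) = ((1:ℕ) : Fin 4) by norm_num, cast_add_pos]] at this
        exact this
      have e3 : (KjG G H a b)ᶜ.Adj (f (k + ((2:ℕ) : Fin 4))) (f (k + ((3:ℕ) : Fin 4))) := by
        apply f.map_rel_iff.mpr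
        have := cyc_adj_succ (by omega) (k + ((2:ℕ) : Fin 4))
        rw [show (k + ((2:ℕ):Fin 4)) + 1 = k + ((3:ℕ):Fin 4) by
          rw [show (1 : Fin 4) = ((1:ℕ) : Fin 4) by norm_num, cast_add_pos]] at this
        exact this
      have hxyK : (KjG G H a b).Adj (f (k + ((1:ℕ) : Fin 4))) (f (k + ((3:ℕ) : Fin 4))) := by
        have hne' : f (k + ((1:ℕ) : Fin 4)) ≠ f (k + ((3:ℕ) : Fin 4)) :=
          f.injective.ne (Ne.symm hne13)
        have h1 : ¬ (KjG G H a b)ᶜ.Adj (f (k + ((1:ℕ) : Fin 4))) (f (k + ((3:ℕ) : Fin 4))) :=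
          fun h => hnadj13 (f.map_rel_iff.mp h)
        rw [compl_adj] at h1
        push_neg at h1
        exact h1 hne'
      rw [hk2] at e2 e3
      cases hx : f (k + ((1:ℕ) : Fin 4)) with
      | inr w =>
        cases hy : f (k + ((3:ℕ) : Fin 4)) with
        | inr w' =>
          rw [hx, hy] at hxyK
          exact KjG_not_adj_rr G H a b w w' hxyK
        | inl z =>
          rw [hx, hy] at hxyK
          rw [KjG_adj_rl] at hxyK
          obtain ⟨rfl, hAz, hBz⟩ := hxyK
          rw [hy] at e3
          rw [compl_adj] at e3
          have := e3.2
          rw [KjG_adj_ll] at this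
          push_neg at this
          have hne'' : u ≠ z := by
            intro h'
            exact e3.1 (by rw [h'])
          exact (this hne'').2 (Or.inl ⟨hAu, hBz⟩)
      | inl z =>
        cases hy : f (k + ((3:ℕ) : Fin 4)) with
        | inr w' =>
          rw [hx, hy] at hxyK
          rw [KjG_adj_lr] at hxyK
          obtain ⟨rfl, hAz, hBz⟩ := hxyK
          rw [hx] at e2
          rw [compl_adj] at e2
          have := e2.2
          rw [KjG_adj_ll] at this
          push_neg at this
          have hne'' : z ≠ u := by
            intro h'
            exact e2.1 (by rw [h'])
          exact (this hne'').2 (Or.inl ⟨hAz, hBu⟩)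
        | inl z2 =>
          rw [hx] at e2
          rw [hy] at e3
          rw [compl_adj] at e2 e3
          have hz1 := e2.2
          rw [KjG_adj_ll] at hz1
          push_neg at hz1
          have hnez1 : z ≠ u := fun h' => e2.1 (by rw [h'])
          obtain ⟨hnH1, hnEP1⟩ := hz1 hnez1
          have hz2 := e3.2
          rw [KjG_adj_ll] at hz2
          push_neg at hz2
          have hnez2 : u ≠ z2 := fun h' => e3.1 (by rw [h'])
          obtain ⟨hnH2, hnEP2⟩ := hz2 hnez2
          have hAz : ¬ G.Adj a z ∧ ¬ G.Adj b z := by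
            constructor
            · intro h'; exact hnEP1 (Or.inl ⟨h', hBu⟩)
            · intro h'; exact hnEP1 (Or.inr ⟨h', hAu⟩)
          have hAz2 : ¬ G.Adj a z2 ∧ ¬ G.Adj b z2 := by
            constructor
            · intro h'; exact hnEP2 (Or.inr ⟨hBu, h'⟩)
            · intro h'; exact hnEP2 (Or.inl ⟨hAu, h'⟩)
          rw [hx, hy] at hxyK
          rw [KjG_adj_ll] at hxyK
          rcases hxyK.2 with hHe | hEPe
          · exact no_far_edge G H hH hc hab hHe hAz.1 hAz.2 hAz2.1 hAz2.2
          · rcases hEPe with ⟨h1', _⟩ | ⟨h1', _⟩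
            · exact hAz.1 h1'
            · exact hAz.2 h1'
  · -- all vertices on the left
    push_neg at hinr
    have hall : ∀ k, ∃ u, f k = inl u := by
      intro k
      cases hfk : f k with
      | inl u => exact ⟨u, rfl⟩
      | inr u => exact absurd hfk (hinr k u)
    choose g hg using hall
    have hginj : Function.Injective g := fun k k' h => f.injective (by rw [hg k, hg k', h])
    have hAdjP : ∀ k k' : Fin n, (SimpleGraph.cycleGraph n).Adj k k' →
        ¬ H.Adj (g k) (g k') ∧ ¬ EP G a b (g k) (g k') := by
      intro k k' h
      have h1 := f.map_rel_iff.mpr h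
      rw [hg k, hg k', compl_adj] at h1
      have h2 := h1.2
      rw [KjG_adj_ll] at h2
      push_neg at h2
      have hne' : g k ≠ g k' := fun h' => h1.1 (by rw [h'])
      exact h2 hne'
    have hNon : ∀ k k' : Fin n, k ≠ k' → ¬ (SimpleGraph.cycleGraph n).Adj k k' →
        H.Adj (g k) (g k') ∨ EP G a b (g k) (g k') := by
      intro k k' hne hna
      have h1 : ¬ (KjG G H a b)ᶜ.Adj (f k) (f k') := fun h => hna (f.map_rel_iff.mp h)
      rw [hg k, hg k', compl_adj] at h1
      push_neg at h1
      have h2 := h1 (by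
        intro h'
        exact hne (hginj (Sum.inl_injective h')))
      rw [KjG_adj_ll] at h2
      exact h2.2
    -- Step 1: no image vertex is adjacent to both a and b
    have hnoC : ∀ k : Fin n, ¬ (G.Adj a (g k) ∧ G.Adj b (g k)) := by
      rintro k ⟨hA, hB⟩
      have hadj1 : (SimpleGraph.cycleGraph n).Adj k (k + ((1:ℕ) : Fin n)) := by
        have := cyc_adj_succ (by omega) k
        rwa [show (1 : Fin n) = ((1:ℕ) : Fin n) by norm_num] at this
      have hadj2 : (SimpleGraph.cycleGraph n).Adj k (k + ((n-1:ℕ) : Fin n)) := by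
        have := cyc_adj_succ (by omega) (k + ((n-1:ℕ) : Fin n))
        rw [show (k + ((n-1:ℕ) : Fin n)) + 1 = k by
          rw [show (1 : Fin n) = ((1:ℕ) : Fin n) by norm_num, cast_add_pos,
            show (n-1)+1 = n by omega, Fin.natCast_self, add_zero]] at this
        exact this.symm
      have hEP1 := (hAdjP k _ hadj1).2
      have hEP2 := (hAdjP k _ hadj2).2
      have hR1 : ¬ G.Adj a (g (k + ((1:ℕ) : Fin n))) ∧ ¬ G.Adj b (g (k + ((1:ℕ) : Fin n))) := by
        constructor
        · intro h'; exact hEP1 (Or.inr ⟨hB, h'⟩)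
        · intro h'; exact hEP1 (Or.inl ⟨hA, h'⟩)
      have hR2 : ¬ G.Adj a (g (k + ((n-1:ℕ) : Fin n))) ∧ ¬ G.Adj b (g (k + ((n-1:ℕ) : Fin n))) := by
        constructor
        · intro h'; exact hEP2 (Or.inr ⟨hB, h'⟩)
        · intro h'; exact hEP2 (Or.inl ⟨hA, h'⟩)
      have hkey : (k + ((n-1:ℕ) : Fin n)) + ((2:ℕ) : Fin n) = k + ((1:ℕ) : Fin n) := by
        rw [cast_add_pos, show (n-1)+2 = n+1 by omega, Nat.cast_add, Fin.natCast_self,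
          zero_add]
      obtain ⟨hne21, hnadj21⟩ := cyc_nonadj hn (k + ((n-1:ℕ) : Fin n)) 2 le_rfl (by omega)
      rw [hkey] at hne21 hnadj21
      rcases hNon _ _ (Ne.symm hne21) hnadj21 with hHe | hEPe
      · exact no_far_edge G H hH hc hab hHe hR2.1 hR2.2 hR1.1 hR1.2
      · rcases hEPe with ⟨h1', _⟩ | ⟨h1', _⟩
        · exact hR2.1 h1'
        · exact hR2.2 h1'

    -- Step 2: if one side of the even-connection is missing, embed into Hᶜ
    by_cases hA : ∃ k, G.Adj a (g k)
    swap
    · push_neg at hA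
      refine (hc n hn).false ⟨⟨g, hginj⟩, ?_⟩
      intro k k'
      constructor
      · intro h
        by_contra hna
        have hkk : k ≠ k' := by
          intro h'
          subst h'
          exact (compl_adj H _ _).mp h |>.1 rfl
        rcases hNon k k' hkk hna with hHe | hEPe
        · exact ((compl_adj H _ _).mp h).2 hHe
        · rcases hEPe with ⟨h1', _⟩ | ⟨_, h2'⟩
          · exact hA k h1'
          · exact hA k' h2'
      · intro h
        exact (compl_adj H _ _).mpr ⟨hginj.ne h.ne, (hAdjP k k' h).1⟩
    by_cases hB : ∃ k, G.Adj b (g k)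
    swap
    · push_neg at hB
      refine (hc n hn).false ⟨⟨g, hginj⟩, ?_⟩
      intro k k'
      constructor
      · intro h
        by_contra hna
        have hkk : k ≠ k' := by
          intro h'
          subst h'
          exact (compl_adj H _ _).mp h |>.1 rfl
        rcases hNon k k' hkk hna with hHe | hEPe
        · exact ((compl_adj H _ _).mp h).2 hHe
        · rcases hEPe with ⟨_, h2'⟩ | ⟨h1', _⟩
          · exact hB k' h2'
          · exact hB k h1'
      · intro h
        exact (compl_adj H _ _).mpr ⟨hginj.ne h.ne, (hAdjP k k' h).1⟩
    -- Step 3: both sides occur, find two distant "outside" positions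
    obtain ⟨k0, hk0⟩ := hA
    obtain ⟨k1, hk1⟩ := hB
    have hstepAB : ∀ m : Fin n, G.Adj a (g m) → G.Adj b (g (m + ((1:ℕ) : Fin n))) → False := by
      intro m h1 h2
      have hadj : (SimpleGraph.cycleGraph n).Adj m (m + ((1:ℕ) : Fin n)) := by
        have := cyc_adj_succ (by omega) m
        rwa [show (1 : Fin n) = ((1:ℕ) : Fin n) by norm_num] at this
      exact (hAdjP m _ hadj).2 (Or.inl ⟨h1, h2⟩)
    have hstepBA : ∀ m : Fin n, G.Adj b (g m) → G.Adj a (g (m + ((1:ℕ) : Fin n))) → False := by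
      intro m h1 h2
      have hadj : (SimpleGraph.cycleGraph n).Adj m (m + ((1:ℕ) : Fin n)) := by
        have := cyc_adj_succ (by omega) m
        rwa [show (1 : Fin n) = ((1:ℕ) : Fin n) by norm_num] at this
      exact (hAdjP m _ hadj).2 (Or.inr ⟨h1, h2⟩)
    have arc : ∀ (P Q : Fin n → Prop),
        (∀ m, P m → Q (m + ((1:ℕ) : Fin n)) → False) →
        (∀ m, P m → Q m → False) →
        (∀ m, ¬ P m → ¬ Q m → ¬ G.Adj a (g m) ∧ ¬ G.Adj b (g m)) →
        ∀ (d : ℕ) (k : Fin n), P k → Q (k + (d : Fin n)) →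
        ∃ j : ℕ, 0 < j ∧ j < d ∧ ¬ G.Adj a (g (k + (j : Fin n))) ∧
          ¬ G.Adj b (g (k + (j : Fin n))) := by
      intro P Q h1 h2 h3 d
      induction d with
      | zero =>
        intro k hP hQ
        rw [Nat.cast_zero, add_zero] at hQ
        exact absurd hQ (fun h => h2 k hP h)
      | succ d ih =>
        intro k hP hQ
        by_cases hPd : P (k + (d : Fin n))
        · exfalso
          apply h1 _ hPd
          rwa [← cast_add_pos] at hQ
        by_cases hQd : Q (k + (d : Fin n))
        · obtain ⟨j, hj1, hj2, hj3⟩ := ih k hP hQd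
          exact ⟨j, hj1, by omega, hj3⟩
        · have hd0 : 0 < d := by
            rcases Nat.eq_zero_or_pos d with h | h
            · subst h
              rw [Nat.cast_zero, add_zero] at hPd
              exact absurd hP hPd
            · exact h
          exact ⟨d, hd0, by omega, h3 _ hPd hQd⟩
    have hk0k1 : k0 ≠ k1 := by
      intro h'
      exact hnoC k0 ⟨hk0, h' ▸ hk1⟩
    set d1 := (k1 - k0).val with hd1
    set d2 := (k0 - k1).val with hd2
    have hk1eq : k1 = k0 + (d1 : Fin n) := by
      rw [hd1, Fin.cast_val_eq_self]
      ring
    have hk0eq : k0 = k1 + (d2 : Fin n) := by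
      rw [hd2, Fin.cast_val_eq_self]
      ring
    have hd1n : d1 < n := (k1 - k0).isLt
    have hd1pos : 0 < d1 := by
      rcases Nat.eq_zero_or_pos d1 with h | h
      · exfalso
        apply hk0k1
        have hz : k1 - k0 = 0 := by
          apply Fin.ext
          simp only [Fin.val_zero]
          omega
        exact (sub_eq_zero.mp hz).symm
      · exact h
    have hsum : d1 + d2 = n := by
      have hnegrel : k0 - k1 = -(k1 - k0) := by ring
      have : d2 = (n - d1) % n := by
        rw [hd2, hnegrel, Fin.neg_def]
      rw [this, Nat.mod_eq_of_lt (by omega)]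
      omega
    obtain ⟨j1, hj1pos, hj1lt, hRm1⟩ :=
      arc (fun m => G.Adj a (g m)) (fun m => G.Adj b (g m)) hstepAB
        (fun m h1 h2 => hnoC m ⟨h1, h2⟩) (fun m h1 h2 => ⟨h1, h2⟩) d1 k0 hk0
        (by rw [← hk1eq]; exact hk1)
    obtain ⟨j2, hj2pos, hj2lt, hRm2⟩ :=
      arc (fun m => G.Adj b (g m)) (fun m => G.Adj a (g m)) hstepBA
        (fun m h1 h2 => hnoC m ⟨h2, h1⟩) (fun m h1 h2 => ⟨h2, h1⟩) d2 k1 hk1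
        (by rw [← hk0eq]; exact hk0)
    -- the two outside positions are distant on the cycle
    have hm2eq : k1 + ((j2 : ℕ) : Fin n) =
        (k0 + ((j1 : ℕ) : Fin n)) + (((d1 + j2 - j1 : ℕ)) : Fin n) := by
      rw [hk1eq, cast_add_pos, cast_add_pos, show j1 + (d1 + j2 - j1) = d1 + j2 by omega]
    obtain ⟨hne', hnadj'⟩ := cyc_nonadj hn (k0 + ((j1 : ℕ) : Fin n)) (d1 + j2 - j1)
      (by omega) (by omega)
    rw [← hm2eq] at hne' hnadj'
    rcases hNon _ _ (Ne.symm hne') hnadj' with hHe | hEPe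
    · exact no_far_edge G H hH hc hab hHe hRm1.1 hRm1.2 hRm2.1 hRm2.2
    · rcases hEPe with ⟨h1', _⟩ | ⟨h1', _⟩
      · exact hRm1.1 h1'
      · exact hRm1.2 h1'

end CochordAux

namespace CochordAux
open SimpleGraph Sum RegPowers
open Fin.NatCast Fin.CommRing

variable {V : Type}

lemma polar_adj_ll (G : SimpleGraph V) [DecidableEq V] {s : ℕ} (eF : Fin s → V × V) (u v : V) :
    (polarGraph G eF).Adj (inl u) (inl v) ↔ u ≠ v ∧
      ((G.Adj u v ∨ EvenConnected G eF u v) ∨ (G.Adj v u ∨ EvenConnected G eF v u)) := by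
  rw [polarGraph, SimpleGraph.fromRel_adj]
  simp

lemma polar_adj_lr (G : SimpleGraph V) [DecidableEq V] {s : ℕ} (eF : Fin s → V × V) (u v : V) :
    (polarGraph G eF).Adj (inl u) (inr v) ↔ u = v ∧ EvenConnected G eF u u := by
  rw [polarGraph, SimpleGraph.fromRel_adj]
  simp

lemma polar_not_rr (G : SimpleGraph V) [DecidableEq V] {s : ℕ} (eF : Fin s → V × V) (u v : V) :
    ¬ (polarGraph G eF).Adj (inr u) (inr v) := by
  rw [polarGraph, SimpleGraph.fromRel_adj]
  rintro ⟨-, h | h⟩ <;> exact h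

open RegPowers in
theorem cochord_polarGraph_le' {V : Type} [Fintype V] [DecidableEq V]
    (G : SimpleGraph V) (e : V × V) (he : G.Adj e.1 e.2)
    (G' : SimpleGraph (V ⊕ V)) (hG' : G' = polarGraph G (fun _ : Fin 1 => e)) :
    cochord G' ≤ cochord G := by
  classical
  subst hG'
  obtain ⟨m0, H0, hH0, hsup0⟩ := CochordAux.exists_cover G
  have hSne : {n : ℕ | ∃ H : Fin n → SimpleGraph V,
      (∀ i, H i ≤ G ∧ IsChordal (H i)ᶜ) ∧ (⨆ i, H i) = G}.Nonempty :=
    ⟨m0, H0, hH0, hsup0⟩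
  obtain ⟨H, hH, hsup⟩ : ∃ H : Fin (cochord G) → SimpleGraph V,
      (∀ i, H i ≤ G ∧ IsChordal (H i)ᶜ) ∧ (⨆ i, H i) = G := Nat.sInf_mem hSne
  obtain ⟨j, hj⟩ : ∃ j, (H j).Adj e.1 e.2 := by
    have h := he
    rw [← hsup, iSup_adj] at h
    exact h
  have hEC : ∀ u v : V, EvenConnected G (fun _ : Fin 1 => e) u v ↔ EP G e.1 e.2 u v :=
    fun u v => ec_iff G e.1 e.2 he u v
  set K : Fin (cochord G) → SimpleGraph (V ⊕ V) :=
    fun i => if i = j then KjG G (H j) e.1 e.2 else inlG (H i) with hK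
  have hKj : K j = KjG G (H j) e.1 e.2 := by simp [hK]
  have hKi : ∀ i, i ≠ j → K i = inlG (H i) := fun i h => by simp [hK, h]
  have hle : ∀ i, K i ≤ polarGraph G (fun _ : Fin 1 => e) := by
    intro i x y hxy
    by_cases hij : i = j
    · rw [hij, hKj] at hxy
      match x, y with
      | inl u, inl v =>
        rw [KjG_adj_ll] at hxy
        rw [polar_adj_ll]
        refine ⟨hxy.1, Or.inl ?_⟩
        rcases hxy.2 with h | h
        · exact Or.inl ((hH j).1 h)
        · exact Or.inr ((hEC u v).mpr h)
      | inl u, inr v =>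
        rw [KjG_adj_lr] at hxy
        rw [polar_adj_lr]
        exact ⟨hxy.1, (hEC u u).mpr (Or.inl ⟨hxy.2.1, hxy.2.2⟩)⟩
      | inr u, inl v =>
        rw [KjG_adj_rl] at hxy
        apply SimpleGraph.Adj.symm
        rw [polar_adj_lr]
        exact ⟨hxy.1, (hEC v v).mpr (Or.inl ⟨hxy.2.1, hxy.2.2⟩)⟩
      | inr u, inr v => exact absurd hxy (KjG_not_adj_rr _ _ _ _ _ _)
    · rw [hKi i hij] at hxy
      match x, y with
      | inl u, inl v =>
        rw [inlG_adj_ll] at hxy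
        rw [polar_adj_ll]
        exact ⟨hxy.ne, Or.inl (Or.inl ((hH i).1 hxy))⟩
      | inr u, _ => exact absurd hxy (inlG_not_adj_r _ _ _)
      | inl u, inr v => exact absurd hxy.symm (inlG_not_adj_r _ _ _)
  apply Nat.sInf_le
  refine ⟨K, fun i => ⟨hle i, ?_⟩, ?_⟩
  · by_cases hij : i = j
    · rw [hK]
      simp only [hij, if_pos rfl]
      exact Kj_compl_chordal G (H j) e.1 e.2 (hH j).1 (hH j).2 hj
    · rw [hKi i hij]
      exact inlG_compl_chordal (H i) (hH i).2
  · apply le_antisymm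
    · exact iSup_le hle
    · intro x y h
      rw [iSup_adj]
      match x, y with
      | inl u, inl v =>
        rw [polar_adj_ll] at h
        obtain ⟨hne, hcase⟩ := h
        have hGadj : G.Adj u v → ∃ i, (K i).Adj (inl u) (inl v) := by
          intro hguv
          have h2 := hguv
          rw [← hsup, iSup_adj] at h2
          obtain ⟨i, hi⟩ := h2
          refine ⟨i, ?_⟩
          by_cases hij : i = j
          · rw [hij] at hi ⊢
            rw [hKj, KjG_adj_ll]
            exact ⟨hne, Or.inl hi⟩
          · rw [hKi i hij, inlG_adj_ll]
            exact hi
        have hEPadj : EP G e.1 e.2 u v → ∃ i, (K i).Adj (inl u) (inl v) := by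
          intro hep
          refine ⟨j, ?_⟩
          rw [hKj, KjG_adj_ll]
          exact ⟨hne, Or.inr hep⟩
        rcases hcase with (h | h) | (h | h)
        · exact hGadj h
        · exact hEPadj ((hEC u v).mp h)
        · exact hGadj h.symm
        · exact hEPadj (EP_symm ((hEC v u).mp h))
      | inl u, inr v =>
        rw [polar_adj_lr] at h
        obtain ⟨rfl, hec⟩ := h
        refine ⟨j, ?_⟩
        rw [hKj, KjG_adj_lr]
        rcases (hEC u u).mp hec with ⟨h1, h2⟩ | ⟨h1, h2⟩
        · exact ⟨rfl, h1, h2⟩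
        · exact ⟨rfl, h2, h1⟩
      | inr u, inl v =>
        have h' := h.symm
        rw [polar_adj_lr] at h'
        obtain ⟨rfl, hec⟩ := h'
        refine ⟨j, ?_⟩
        rw [hKj, KjG_adj_rl]
        rcases (hEC v v).mp hec with ⟨h1, h2⟩ | ⟨h1, h2⟩
        · exact ⟨rfl, h1, h2⟩
        · exact ⟨rfl, h2, h1⟩
      | inr u, inr v => exact absurd h (polar_not_rr _ _ _ _)

end CochordAux

namespace RegPowers

/-- Let `G` be a finite simple graph, `e` an edge of `G`, and `G'`
the simple graph whose edge ideal is the polarization of the colon ideal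
`(I(G)^2 : e)` (described, via Banerjee's theorem, by even-connections with
respect to `e`).  Then `cochord(G') ≤ cochord(G)`. -/
theorem cochord_polarGraph_le {V : Type} [Fintype V] [DecidableEq V]
    (G : SimpleGraph V) (e : V × V) (he : G.Adj e.1 e.2)
    (G' : SimpleGraph (V ⊕ V)) (hG' : G' = polarGraph G (fun _ : Fin 1 => e)) :
    cochord G' ≤ cochord G := by
  exact CochordAux.cochord_polarGraph_le' G e he G' hG'

end RegPowers
end

section
/- Let G be a bipartite graph and let e_1,…,e_s (s ≥ 1) be edges of G, not necessarily distinct. Let G' be the graph associated to the colon ideal (I(G)^{s+1} : e_1⋯e_s). Then cochord(G') ≤ cochord(G). -/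
/-!
Common definitions: edge ideals, Castelnuovo–Mumford regularity (via graded
free resolutions), chordal/co-chordal graphs, co-chordal cover number,
induced matchings, matchings, vertex covers, even-connections and the
polarized colon graph.
-/

open MvPolynomial

namespace RegPowers


/-! ### Auxiliary lemmas -/

section Aux

set_option linter.unusedSectionVars false
set_option linter.unusedVariables false

variable {k : Type} [Field k] {V : Type} [DecidableEq V]

/-- vertex multiset of a multiset of pairs -/
def vms (M : Multiset (V × V)) : Multiset V := M.map Prod.fst + M.map Prod.snd

lemma vms_cons (a : V × V) (M : Multiset (V × V)) :
    vms (a ::ₘ M) = a.1 ::ₘ a.2 ::ₘ vms M := by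
  simp only [vms, Multiset.map_cons]
  rw [Multiset.cons_add, Multiset.add_cons]

lemma vms_zero : vms (0 : Multiset (V × V)) = 0 := rfl

lemma vms_singleton (f : V × V) : vms ({f} : Multiset (V × V)) = {f.1, f.2} := by
  have : ({f} : Multiset (V × V)) = f ::ₘ 0 := rfl
  rw [this, vms_cons, vms_zero]
  rfl

lemma pair_eq {a b c d : V} (h : ({a, b} : Multiset V) = {c, d}) :
    (a = c ∧ b = d) ∨ (a = d ∧ b = c) := by
  have h' : a ::ₘ ({b} : Multiset V) = c ::ₘ {d} := h
  rcases Multiset.cons_eq_cons.mp h' with ⟨h1, h2⟩ | ⟨hne, cs, h1, h2⟩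
  · left; exact ⟨h1, Multiset.singleton_inj.mp h2⟩
  · right
    have hcs : cs = 0 := by
      have hc := congrArg Multiset.card h1
      simp only [Multiset.card_singleton, Multiset.card_cons] at hc
      have : Multiset.card cs = 0 := by omega
      exact Multiset.card_eq_zero.mp this
    subst hcs
    simp only [Multiset.cons_zero, Multiset.singleton_inj] at h1 h2
    exact ⟨h2.symm, h1⟩

lemma mem_vms {x : V} {M : Multiset (V × V)} (h : x ∈ vms M) :
    ∃ f ∈ M, f.1 = x ∨ f.2 = x := by
  rcases Multiset.mem_add.mp h with h' | h' <;>
    · obtain ⟨f, hf, hfx⟩ := Multiset.mem_map.mp h'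
      exact ⟨f, hf, by tauto⟩

lemma core (G : SimpleGraph V) :
    ∀ (s : ℕ) (u v : V) (E F : Multiset (V × V)),
    (∀ p ∈ E, G.Adj p.1 p.2) → (∀ p ∈ F, G.Adj p.1 p.2) →
    Multiset.card E = s → Multiset.card F = s + 1 →
    vms F = u ::ₘ v ::ₘ vms E →
    G.Adj u v ∨ ∃ m : ℕ, ∃ p : ℕ → V, 1 ≤ m ∧ p 0 = u ∧ p (2 * m + 1) = v ∧
      (∀ r, r < 2 * m + 1 → G.Adj (p r) (p (r + 1))) ∧
      Multiset.map (fun l => Sym2.mk (p (2 * l + 1)) (p (2 * l + 2))) (Multiset.range m)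
        ≤ E.map (fun f => Sym2.mk f.1 f.2) := by
  intro s
  induction s with
  | zero =>
    intro u v E F hE hF hcE hcF hvms
    obtain ⟨f, rfl⟩ := Multiset.card_eq_one.mp hcF
    have hE0 : E = 0 := Multiset.card_eq_zero.mp hcE
    subst hE0
    rw [vms_singleton, vms_zero] at hvms
    left
    have hf := hF f (Multiset.mem_singleton_self f)
    have hvms' : ({f.1, f.2} : Multiset V) = {u, v} := hvms
    rcases pair_eq hvms' with ⟨h1, h2⟩ | ⟨h1, h2⟩
    · rw [h1, h2] at hf; exact hf
    · rw [h1, h2] at hf; exact hf.symm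
  | succ s ih =>
    intro u v E F hE hF hcE hcF hvms
    -- u occurs in vms F
    have hu : u ∈ vms F := by rw [hvms]; exact Multiset.mem_cons_self _ _
    obtain ⟨f, hfF, hfu⟩ := mem_vms hu
    -- x := other endpoint of f
    set x : V := if f.1 = u then f.2 else f.1 with hxdef
    have hfpair : ({f.1, f.2} : Multiset V) = {u, x} := by
      rcases hfu with h | h
      · rw [hxdef, if_pos h, h]
      · rcases eq_or_ne f.1 u with h' | h'
        · rw [hxdef, if_pos h', h', h]
        · rw [hxdef, if_neg h', h]
          exact Multiset.pair_comm f.1 u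
    have hadjux : G.Adj u x := by
      have hf := hF f hfF
      rcases hfu with h | h
      · rw [hxdef, if_pos h, ← h]; exact hf
      · rcases eq_or_ne f.1 u with h' | h'
        · rw [hxdef, if_pos h', ← h']; exact hf
        · rw [hxdef, if_neg h']
          rw [← h]; exact hf.symm
    have hxne : x ≠ u := hadjux.ne'
    -- peel f off F
    have hFsplit : F = f ::ₘ F.erase f := (Multiset.cons_erase hfF).symm
    set F' := F.erase f with hF'def
    have hvmsF : u ::ₘ x ::ₘ vms F' = u ::ₘ v ::ₘ vms E := by
      rw [← hvms, hFsplit, vms_cons]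
      have : ({f.1, f.2} : Multiset V) + vms F' = ({u, x} : Multiset V) + vms F' := by
        rw [hfpair]
      simpa [Multiset.insert_eq_cons, Multiset.cons_add] using this.symm
    have hvmsF' : x ::ₘ vms F' = v ::ₘ vms E :=
      (Multiset.cons_inj_right u).mp hvmsF
    rcases eq_or_ne x v with hxv | hxv
    · -- walk of length 1? No: x = v means G.Adj u v
      left; rw [← hxv]; exact hadjux
    · -- x ∈ vms E
      have hxE : x ∈ vms E := by
        have : x ∈ v ::ₘ vms E := by rw [← hvmsF']; exact Multiset.mem_cons_self _ _
        rcases Multiset.mem_cons.mp this with h | h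
        · exact absurd h hxv
        · exact h
      obtain ⟨e', he'E, he'x⟩ := mem_vms hxE
      set y : V := if e'.1 = x then e'.2 else e'.1 with hydef
      have he'pair : ({e'.1, e'.2} : Multiset V) = {x, y} := by
        rcases he'x with h | h
        · rw [hydef, if_pos h, h]
        · rcases eq_or_ne e'.1 x with h' | h'
          · rw [hydef, if_pos h', h', h]
          · rw [hydef, if_neg h', h]
            exact Multiset.pair_comm e'.1 x
      have hadjxy : G.Adj x y := by
        have he := hE e' he'E
        rcases he'x with h | h
        · rw [hydef, if_pos h, ← h]; exact he
        · rcases eq_or_ne e'.1 x with h' | h'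
          · rw [hydef, if_pos h', ← h']; exact he
          · rw [hydef, if_neg h', ← h]; exact he.symm
      have he'sym : Sym2.mk e'.1 e'.2 = Sym2.mk x y := by
        have : e' = (e'.1, e'.2) := rfl
        rw [this]
        rcases pair_eq he'pair with ⟨h1, h2⟩ | ⟨h1, h2⟩
        · rw [h1, h2]
        · rw [h1, h2]; exact Sym2.eq_swap
      have hEsplit : E = e' ::ₘ E.erase e' := (Multiset.cons_erase he'E).symm
      set E' := E.erase e' with hE'def
      have hvmsE : x ::ₘ vms F' = v ::ₘ x ::ₘ y ::ₘ vms E' := by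
        rw [hvmsF', hEsplit, vms_cons]
        congr 1
        have : ({e'.1, e'.2} : Multiset V) + vms E' = ({x, y} : Multiset V) + vms E' := by
          rw [he'pair]
        simpa [Multiset.insert_eq_cons, Multiset.cons_add] using this
      have hvmsE' : vms F' = v ::ₘ y ::ₘ vms E' := by
        have : x ::ₘ vms F' = x ::ₘ v ::ₘ y ::ₘ vms E' := by
          rw [hvmsE]
          rw [Multiset.cons_swap v x]
        exact (Multiset.cons_inj_right x).mp this
      have hvmsE'' : vms F' = y ::ₘ v ::ₘ vms E' := by
        rw [hvmsE', Multiset.cons_swap]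
      -- apply induction hypothesis
      have hcE' : Multiset.card E' = s := by
        have := congrArg Multiset.card hEsplit
        simp [hcE] at this
        omega
      have hcF' : Multiset.card F' = s + 1 := by
        have := congrArg Multiset.card hFsplit
        simp [hcF] at this
        omega
      have hE'adj : ∀ p ∈ E', G.Adj p.1 p.2 := fun p hp =>
        hE p (Multiset.mem_of_le (Multiset.erase_le _ _) hp)
      have hF'adj : ∀ p ∈ F', G.Adj p.1 p.2 := fun p hp =>
        hF p (Multiset.mem_of_le (Multiset.erase_le _ _) hp)
      have hEmap : E.map (fun f => Sym2.mk f.1 f.2) = Sym2.mk x y ::ₘ E'.map (fun f => Sym2.mk f.1 f.2) := by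
        rw [hEsplit, Multiset.map_cons, he'sym]
      rcases ih y v E' F' hE'adj hF'adj hcE' hcF' hvmsE'' with hyv | ⟨m, q, hm, hq0, hqv, hqadj, hqle⟩
      · -- walk u, x, y, v
        right
        refine ⟨1, fun r => if r = 0 then u else if r = 1 then x else if r = 2 then y else v,
          le_refl 1, rfl, rfl, ?_, ?_⟩
        · intro r hr
          interval_cases r <;> simp [hadjux, hadjxy, hyv]
        · have hmap : Multiset.map (fun l => Sym2.mk
              (if 2 * l + 1 = 0 then u else if 2 * l + 1 = 1 then x
                else if 2 * l + 1 = 2 then y else v)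
               (if 2 * l + 2 = 0 then u else if 2 * l + 2 = 1 then x
                else if 2 * l + 2 = 2 then y else v)) (Multiset.range 1)
              = {Sym2.mk x y} := by
            have h0 : Multiset.range 1 = {0} := rfl
            rw [h0, Multiset.map_singleton]
            norm_num
          rw [hmap, hEmap]
          exact Multiset.singleton_le.mpr (Multiset.mem_cons_self _ _)
      · -- prepend u, x to walk q
        right
        refine ⟨m + 1, fun r => if r = 0 then u else if r = 1 then x else q (r - 2),
          le_add_self, rfl, ?_, ?_, ?_⟩
        · have h1 : 2 * (m + 1) + 1 ≠ 0 := by omega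
          have h2 : 2 * (m + 1) + 1 ≠ 1 := by omega
          simp only [h1, h2, if_false]
          have : 2 * (m + 1) + 1 - 2 = 2 * m + 1 := by omega
          rw [this, hqv]
        · intro r hr
          match r with
          | 0 => simpa using hadjux
          | 1 => simpa [hq0] using hadjxy
          | (n + 2) =>
            have hn : n < 2 * m + 1 := by omega
            have e1 : n + 2 - 2 = n := by omega
            have e2 : n + 2 + 1 - 2 = n + 1 := by omega
            simp only [show n + 2 ≠ 0 by omega, show n + 2 ≠ 1 by omega,
              show n + 2 + 1 ≠ 0 by omega, show n + 2 + 1 ≠ 1 by omega, if_false, e1, e2]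
            exact hqadj n hn
        · -- even edges multiset
          have hrange : Multiset.range (m + 1) = 0 ::ₘ (Multiset.range m).map Nat.succ := by
            have := List.range_succ_eq_map (n := m)
            rw [Multiset.range]
            rw [this]
            rfl
          rw [hrange, Multiset.map_cons, Multiset.map_map]
          have hhead : (fun l => Sym2.mk
              (if 2 * l + 1 = 0 then u else if 2 * l + 1 = 1 then x else q (2 * l + 1 - 2))
               (if 2 * l + 2 = 0 then u else if 2 * l + 2 = 1 then x else q (2 * l + 2 - 2))) 0
              = Sym2.mk x y := by norm_num [hq0]
          have htail : Multiset.map ((fun l => Sym2.mk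
              (if 2 * l + 1 = 0 then u else if 2 * l + 1 = 1 then x else q (2 * l + 1 - 2))
               (if 2 * l + 2 = 0 then u else if 2 * l + 2 = 1 then x else q (2 * l + 2 - 2)))
                ∘ Nat.succ) (Multiset.range m)
              = Multiset.map (fun l => Sym2.mk (q (2 * l + 1)) (q (2 * l + 2)))
                  (Multiset.range m) := by
            apply Multiset.map_congr rfl
            intro l _
            simp only [Function.comp_apply]
            rw [show 2 * Nat.succ l + 1 = 2 * l + 3 from by omega,
               show 2 * Nat.succ l + 2 = 2 * l + 4 from by omega]
            rw [if_neg (by omega), if_neg (by omega), if_neg (by omega), if_neg (by omega)]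
            rw [show 2 * l + 3 - 2 = 2 * l + 1 from by omega,
               show 2 * l + 4 - 2 = 2 * l + 2 from by omega]
          rw [htail, hEmap]
          have hc := Multiset.cons_le_cons (Sym2.mk x y) hqle
          convert hc using 2


noncomputable def edgeExp (g : V × V) : (V →₀ ℕ) := Finsupp.single g.1 1 + Finsupp.single g.2 1

def expSet (G : SimpleGraph V) (t : ℕ) : Set (V →₀ ℕ) :=
  {d | ∃ g : Fin t → V × V, (∀ j, G.Adj (g j).1 (g j).2) ∧ d = ∑ j, edgeExp (g j)}

lemma X_mul_X (a b : V) : (X a * X b : MvPolynomial V k) = monomial (edgeExp (a, b)) 1 := by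
  rw [X, X, monomial_mul, one_mul]
  rfl

lemma edgeIdeal_eq_span (G : SimpleGraph V) :
    edgeIdeal k G = Ideal.span ((fun d => monomial d (1 : k)) '' expSet G 1) := by
  unfold edgeIdeal
  congr 1
  ext m
  constructor
  · rintro ⟨u, v, huv, rfl⟩
    refine ⟨edgeExp (u, v), ⟨fun _ => (u, v), fun _ => huv, ?_⟩, (X_mul_X u v).symm⟩
    rw [Fin.sum_univ_one]
  · rintro ⟨d, ⟨g, hg, rfl⟩, rfl⟩
    refine ⟨(g 0).1, (g 0).2, hg 0, ?_⟩
    rw [X_mul_X, Fin.sum_univ_one]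

lemma edgeIdeal_pow_eq_span (G : SimpleGraph V) (t : ℕ) :
    edgeIdeal k G ^ t = Ideal.span ((fun d => monomial d (1 : k)) '' expSet G t) := by
  induction t with
  | zero =>
    rw [pow_zero]
    have h0 : expSet G 0 = {0} := by
      ext d
      constructor
      · rintro ⟨g, hg, rfl⟩; simp
      · rintro rfl; exact ⟨Fin.elim0, fun j => j.elim0, by simp⟩
    rw [h0, Set.image_singleton, monomial_zero', C_1, Ideal.span_singleton_one, Ideal.one_eq_top]
  | succ t ih =>
    rw [pow_succ, ih, edgeIdeal_eq_span, Ideal.span_mul_span']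
    congr 1
    ext x
    constructor
    · rintro ⟨a, ⟨da, ⟨ga, hga, rfl⟩, rfl⟩, b, ⟨db, ⟨gb, hgb, rfl⟩, rfl⟩, rfl⟩
      refine ⟨_, ⟨Fin.snoc ga (gb 0), ?_, rfl⟩, ?_⟩
      · intro j
        refine Fin.lastCases ?_ ?_ j
        · rw [Fin.snoc_last]; exact hgb 0
        · intro i; rw [Fin.snoc_castSucc]; exact hga i
      · show _ = monomial _ 1 * monomial _ 1
        rw [monomial_mul, one_mul, Fin.sum_univ_castSucc]
        simp only [Fin.snoc_castSucc, Fin.snoc_last, Fin.sum_univ_one]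
    · rintro ⟨d, ⟨g, hg, rfl⟩, rfl⟩
      refine ⟨monomial (∑ j : Fin t, edgeExp (g j.castSucc)) 1,
        ⟨_, ⟨fun j => g j.castSucc, fun j => hg _, rfl⟩, rfl⟩,
        monomial (edgeExp (g (Fin.last t))) 1,
        ⟨_, ⟨fun _ => g (Fin.last t), fun _ => hg _, by rw [Fin.sum_univ_one]⟩, rfl⟩, ?_⟩
      show monomial _ 1 * monomial _ 1 = _
      rw [monomial_mul, one_mul, Fin.sum_univ_castSucc]

lemma prod_monomial {ι : Type} [DecidableEq ι] (s : Finset ι) (d : ι → (V →₀ ℕ)) :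
    (∏ i ∈ s, (monomial (d i) (1 : k))) = monomial (∑ i ∈ s, d i) 1 := by
  induction s using Finset.induction_on with
  | empty => simp
  | @insert a s hnotmem ih =>
    rw [Finset.prod_insert hnotmem, Finset.sum_insert hnotmem, ih, monomial_mul, one_mul]

lemma prod_mem_pow (I : Ideal (MvPolynomial V k)) (T : Multiset (MvPolynomial V k))
    (h : ∀ f ∈ T, f ∈ I) : T.prod ∈ I ^ Multiset.card T := by
  induction T using Multiset.induction_on with
  | empty => simp [Ideal.one_eq_top]
  | cons a T ih =>
    rw [Multiset.prod_cons, Multiset.card_cons, pow_succ, mul_comm (I ^ Multiset.card T) I]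
    exact Ideal.mul_mem_mul (h a (Multiset.mem_cons_self a T))
      (ih fun f hf => h f (Multiset.mem_cons_of_mem hf))


section EvenConnection

/-- the multiset walk condition -/
def WalkCond (G : SimpleGraph V) {s : ℕ} (e : Fin s → V × V) (u v : V) : Prop :=
  ∃ (m : ℕ) (p : ℕ → V), 1 ≤ m ∧ p 0 = u ∧ p (2 * m + 1) = v ∧
    (∀ r : ℕ, r < 2 * m + 1 → G.Adj (p r) (p (r + 1))) ∧
    Multiset.map (fun l => Sym2.mk (p (2 * l + 1)) (p (2 * l + 2))) (Multiset.range m)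
      ≤ Multiset.map (fun i => Sym2.mk (e i).1 (e i).2) Finset.univ.val

lemma count_filter_eq {s : ℕ} (e : Fin s → V × V) (σ : Sym2 V) :
    Multiset.count σ (Multiset.map (fun i => Sym2.mk (e i).1 (e i).2) Finset.univ.val)
      = (Finset.univ.filter fun j : Fin s => Sym2.mk (e j).1 (e j).2 = σ).card := by
  rw [Multiset.count_map]
  show Multiset.card _ = Multiset.card _
  congr 1
  apply Multiset.filter_congr
  intro x _
  exact eq_comm

lemma count_range_eq (m : ℕ) (h : ℕ → Sym2 V) (σ : Sym2 V) :
    Multiset.count σ (Multiset.map h (Multiset.range m))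
      = ((Finset.range m).filter fun l => h l = σ).card := by
  rw [Multiset.count_map]
  show Multiset.card _ = Multiset.card _
  congr 1
  apply Multiset.filter_congr
  intro x _
  exact eq_comm

lemma walkCond_iff_evenConnected (G : SimpleGraph V) {s : ℕ} (e : Fin s → V × V) (u v : V) :
    WalkCond G e u v ↔ EvenConnected G e u v := by
  constructor
  · rintro ⟨m, p, hm, h0, hv, hadj, hle⟩
    refine ⟨m, p, hm, h0, hv, hadj, ?_, ?_⟩
    · intro l hl
      have : Sym2.mk (p (2 * l + 1)) (p (2 * l + 2))
          ∈ Multiset.map (fun l => Sym2.mk (p (2 * l + 1)) (p (2 * l + 2))) (Multiset.range m) :=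
        Multiset.mem_map_of_mem _ (Multiset.mem_range.mpr hl)
      have hmem := Multiset.mem_of_le hle this
      obtain ⟨i, _, hi⟩ := Multiset.mem_map.mp hmem
      exact ⟨i, hi.symm⟩
    · intro i
      have := Multiset.count_le_of_le (Sym2.mk (e i).1 (e i).2) hle
      rw [count_range_eq, count_filter_eq] at this
      exact this
  · rintro ⟨m, p, hm, h0, hv, hadj, hmem, hcard⟩
    refine ⟨m, p, hm, h0, hv, hadj, ?_⟩
    rw [Multiset.le_iff_count]
    intro σ
    rw [count_range_eq, count_filter_eq]
    by_cases hσ : ∃ i : Fin s, Sym2.mk (e i).1 (e i).2 = σ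
    · obtain ⟨i, rfl⟩ := hσ
      exact hcard i
    · push_neg at hσ
      have : ((Finset.range m).filter fun l => Sym2.mk (p (2 * l + 1)) (p (2 * l + 2)) = σ).card
          = 0 := by
        rw [Finset.card_eq_zero, Finset.filter_eq_empty_iff]
        intro l hl h
        obtain ⟨i, hi⟩ := hmem l (Finset.mem_range.mp hl)
        exact hσ i (hi.symm.trans h)
      rw [this]
      exact Nat.zero_le _

end EvenConnection

section Mon

noncomputable def mon : Sym2 V → MvPolynomial V k :=
  Sym2.lift ⟨fun a b => X a * X b, fun a b => mul_comm _ _⟩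

lemma mon_mk (a b : V) : (mon (Sym2.mk a b) : MvPolynomial V k) = X a * X b := rfl

lemma telesc (m : ℕ) (p : ℕ → V) :
    (X (p 0) * X (p (2 * m + 1)) : MvPolynomial V k) *
      ((Multiset.range m).map (fun l => mon (Sym2.mk (p (2 * l + 1)) (p (2 * l + 2))))).prod
    = ((Multiset.range (m + 1)).map (fun l => (X (p (2 * l)) * X (p (2 * l + 1)) :
        MvPolynomial V k))).prod := by
  induction m with
  | zero => simp
  | succ m ih =>
    rw [Multiset.range_succ, Multiset.map_cons, Multiset.prod_cons]
    rw [show Multiset.range (m + 1 + 1) = (m + 1) ::ₘ Multiset.range (m + 1) from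
      Multiset.range_succ (m + 1), Multiset.map_cons, Multiset.prod_cons, ← ih]
    rw [mon_mk]
    rw [show 2 * (m + 1) + 1 = 2 * m + 3 from by ring, show 2 * (m + 1) = 2 * m + 2 from by ring]
    ring

end Mon


section Membership

variable {k : Type} [Field k] {V : Type} [DecidableEq V] [Fintype V]

lemma adj_mem_edgeIdeal {G : SimpleGraph V} {u v : V} (h : G.Adj u v) :
    (X u * X v : MvPolynomial V k) ∈ edgeIdeal k G :=
  Ideal.subset_span ⟨u, v, h, rfl⟩

lemma prod_edges_eq {s : ℕ} (e : Fin s → V × V) :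
    (∏ i, (X (e i).1 * X (e i).2 : MvPolynomial V k))
      = ((Finset.univ.val.map (fun i => Sym2.mk (e i).1 (e i).2)).map
          (mon (k := k) (V := V))).prod := by
  rw [Multiset.map_map, Finset.prod_eq_multiset_prod]
  congr 1

lemma vms_card (M : Multiset (V × V)) : Multiset.card (vms M) = 2 * Multiset.card M := by
  simp [vms]
  ring

lemma toMultiset_edgeExp (g : V × V) :
    (edgeExp g).toMultiset = {g.1, g.2} := by
  rw [edgeExp, Finsupp.toMultiset_add, Finsupp.toMultiset_single, Finsupp.toMultiset_single,
    one_nsmul, one_nsmul]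
  rfl

lemma sum_singleton_eq_map {ι : Type} (s : Finset ι) (f : ι → V) :
    (∑ j ∈ s, ({f j} : Multiset V)) = s.val.map f := by
  induction s using Finset.cons_induction with
  | empty => simp
  | cons a s ha ih =>
    rw [Finset.sum_cons, ih, Finset.cons_val, Multiset.map_cons, Multiset.singleton_add]

lemma toMultiset_sum_edgeExp {t : ℕ} (g : Fin t → V × V) :
    Finsupp.toMultiset (∑ j, edgeExp (g j)) = vms (Multiset.map g Finset.univ.val) := by
  rw [Finsupp.toMultiset_sum]
  have h1 : ∀ j : Fin t, (edgeExp (g j)).toMultiset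
      = ({(g j).1} : Multiset V) + {(g j).2} := by
    intro j
    rw [toMultiset_edgeExp]
    rfl
  rw [Finset.sum_congr rfl (fun j _ => h1 j), Finset.sum_add_distrib,
    sum_singleton_eq_map, sum_singleton_eq_map]
  rw [vms, Multiset.map_map, Multiset.map_map]
  rfl

lemma walk_mul_prod_mem {G : SimpleGraph V} {s : ℕ} {e : Fin s → V × V}
    (he : ∀ i, G.Adj (e i).1 (e i).2) {u v : V} (h : WalkCond G e u v) :
    (X u * X v : MvPolynomial V k) * ∏ i, (X (e i).1 * X (e i).2)
      ∈ edgeIdeal k G ^ (s + 1) := by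
  obtain ⟨m, p, hm, h0, hv, hadj, hle⟩ := h
  set S := Finset.univ.val.map (fun i : Fin s => Sym2.mk (e i).1 (e i).2) with hS
  set W := Multiset.map (fun l => Sym2.mk (p (2 * l + 1)) (p (2 * l + 2)))
    (Multiset.range m) with hW
  have hcardS : Multiset.card S = s := by simp [hS]
  have hcardW : Multiset.card W = m := by simp [hW]
  have hms : m ≤ s := by
    have := Multiset.card_le_card hle
    rw [hcardS, hcardW] at this
    exact this
  have hSsplit : W + (S - W) = S := add_tsub_cancel_of_le hle
  have hprod : (X u * X v : MvPolynomial V k) * ∏ i, (X (e i).1 * X (e i).2)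
      = ((Multiset.range (m + 1)).map (fun l => (X (p (2 * l)) * X (p (2 * l + 1)) :
          MvPolynomial V k))).prod * ((S - W).map (mon (k := k))).prod := by
    have hsp : (S.map (mon (k := k))).prod
        = (W.map (mon (k := k))).prod * ((S - W).map (mon (k := k))).prod := by
      conv_lhs => rw [← hSsplit]
      rw [Multiset.map_add, Multiset.prod_add]
    rw [prod_edges_eq, ← hS, hsp, ← mul_assoc]
    congr 1
    rw [← telesc m p, h0, hv, hW, Multiset.map_map]
    rfl
  rw [hprod]
  have hodd : ((Multiset.range (m + 1)).map (fun l => (X (p (2 * l)) * X (p (2 * l + 1)) :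
      MvPolynomial V k))).prod ∈ edgeIdeal k G ^ (m + 1) := by
    have := prod_mem_pow (edgeIdeal k G)
      ((Multiset.range (m + 1)).map (fun l => (X (p (2 * l)) * X (p (2 * l + 1)) :
        MvPolynomial V k))) ?_
    · simpa using this
    · intro f hf
      obtain ⟨l, hl, rfl⟩ := Multiset.mem_map.mp hf
      rw [Multiset.mem_range] at hl
      exact adj_mem_edgeIdeal (hadj (2 * l) (by omega))
  have hrest : ((S - W).map (mon (k := k))).prod ∈ edgeIdeal k G ^ (s - m) := by
    have hc : Multiset.card ((S - W).map (mon (k := k) (V := V))) = s - m := by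
      rw [Multiset.card_map, Multiset.card_sub hle, hcardS, hcardW]
    have := prod_mem_pow (edgeIdeal k G) ((S - W).map (mon (k := k))) ?_
    · rwa [hc] at this
    · intro f hf
      obtain ⟨σ, hσ, rfl⟩ := Multiset.mem_map.mp hf
      have hσS : σ ∈ S := Multiset.mem_of_le (tsub_le_self) hσ
      obtain ⟨i, _, rfl⟩ := Multiset.mem_map.mp hσS
      exact adj_mem_edgeIdeal (he i)
  have := Ideal.mul_mem_mul hodd hrest
  rwa [← pow_add, show m + 1 + (s - m) = s + 1 from by omega] at this

lemma adj_mul_prod_mem {G : SimpleGraph V} {s : ℕ} {e : Fin s → V × V}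
    (he : ∀ i, G.Adj (e i).1 (e i).2) {u v : V} (h : G.Adj u v) :
    (X u * X v : MvPolynomial V k) * ∏ i, (X (e i).1 * X (e i).2)
      ∈ edgeIdeal k G ^ (s + 1) := by
  rw [pow_succ']
  refine Ideal.mul_mem_mul (adj_mem_edgeIdeal h) ?_
  rw [prod_edges_eq]
  have hc : Multiset.card ((Finset.univ.val.map (fun i : Fin s => Sym2.mk (e i).1 (e i).2)).map
      (mon (k := k) (V := V))) = s := by simp
  have := prod_mem_pow (edgeIdeal k G)
    ((Finset.univ.val.map (fun i : Fin s => Sym2.mk (e i).1 (e i).2)).map (mon (k := k))) ?_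
  · rwa [hc] at this
  · intro f hf
    obtain ⟨σ, hσ, rfl⟩ := Multiset.mem_map.mp hf
    obtain ⟨i, _, rfl⟩ := Multiset.mem_map.mp hσ
    exact adj_mem_edgeIdeal (he i)

lemma mem_pow_imp {G : SimpleGraph V} {s : ℕ} {e : Fin s → V × V}
    (he : ∀ i, G.Adj (e i).1 (e i).2) {u v : V}
    (h : (X u * X v : MvPolynomial V k) * ∏ i, (X (e i).1 * X (e i).2)
      ∈ edgeIdeal k G ^ (s + 1)) :
    G.Adj u v ∨ WalkCond G e u v := by
  rw [edgeIdeal_pow_eq_span] at h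
  have hprodeq : (∏ i, (X (e i).1 * X (e i).2 : MvPolynomial V k))
      = monomial (∑ i, edgeExp (e i)) 1 := by
    rw [← prod_monomial]
    exact Finset.prod_congr rfl fun i _ => X_mul_X (e i).1 (e i).2
  have hmono : (X u * X v : MvPolynomial V k) * ∏ i, (X (e i).1 * X (e i).2)
      = monomial (edgeExp (u, v) + ∑ i, edgeExp (e i)) (1 : k) := by
    rw [X_mul_X, hprodeq, monomial_mul, one_mul]
  rw [hmono] at h
  set c : V →₀ ℕ := edgeExp (u, v) + ∑ i, edgeExp (e i) with hc
  classical
  have hcsup : c ∈ (monomial c (1 : k)).support := by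
    rw [support_monomial, if_neg one_ne_zero]
    exact Finset.mem_singleton_self _
  obtain ⟨d, ⟨g, hg, rfl⟩, hdle⟩ := mem_ideal_span_monomial_image.mp h _ hcsup
  -- convert to multisets
  have hFm : Finsupp.toMultiset (∑ j, edgeExp (g j)) = vms (Multiset.map g Finset.univ.val) :=
    toMultiset_sum_edgeExp g
  have hcm : Finsupp.toMultiset c = u ::ₘ v ::ₘ vms (Multiset.map e Finset.univ.val) := by
    rw [hc, Finsupp.toMultiset_add, toMultiset_edgeExp, toMultiset_sum_edgeExp]
    show ({u, v} : Multiset V) + _ = _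
    rw [Multiset.insert_eq_cons, Multiset.cons_add, Multiset.singleton_add]
  have hlem : Finsupp.toMultiset (∑ j, edgeExp (g j)) ≤ Finsupp.toMultiset c := by
    rw [Multiset.le_iff_count]
    intro a
    rw [Finsupp.count_toMultiset, Finsupp.count_toMultiset]
    exact hdle a
  have hcards : Multiset.card (Finsupp.toMultiset c)
      ≤ Multiset.card (Finsupp.toMultiset (∑ j, edgeExp (g j))) := by
    rw [hFm, hcm]
    rw [Multiset.card_cons, Multiset.card_cons, vms_card, vms_card]
    simp
    omega
  have heqm : vms (Multiset.map g Finset.univ.val)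
      = u ::ₘ v ::ₘ vms (Multiset.map e Finset.univ.val) := by
    rw [← hFm, ← hcm]
    exact Multiset.eq_of_le_of_card_le hlem hcards
  have hcore := core G s u v (Multiset.map e Finset.univ.val) (Multiset.map g Finset.univ.val)
    (fun q hq => by obtain ⟨i, _, rfl⟩ := Multiset.mem_map.mp hq; exact he i)
    (fun q hq => by obtain ⟨j, _, rfl⟩ := Multiset.mem_map.mp hq; exact hg j)
    (by simp) (by simp) heqm
  rcases hcore with hadj | ⟨m, p, hm, h0, hv, hadjs, hle⟩
  · exact Or.inl hadj
  · refine Or.inr ⟨m, p, hm, h0, hv, hadjs, ?_⟩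
    rwa [Multiset.map_map] at hle

lemma edge_of_mem_edgeIdeal {G : SimpleGraph V} {u v : V} (hne : u ≠ v)
    (h : (X u * X v : MvPolynomial V k) ∈ edgeIdeal k G) : G.Adj u v := by
  classical
  rw [edgeIdeal_eq_span, X_mul_X] at h
  have hcsup : edgeExp (u, v) ∈ ((monomial (edgeExp (u, v)) (1 : k))).support := by
    rw [support_monomial, if_neg one_ne_zero]
    exact Finset.mem_singleton_self _
  obtain ⟨d, ⟨g, hg, rfl⟩, hdle⟩ := mem_ideal_span_monomial_image.mp h _ hcsup
  have hab := hg 0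
  have hsum : (∑ j : Fin 1, edgeExp (g j)) = edgeExp (g 0) := Fin.sum_univ_one _
  rw [hsum] at hdle
  have hne' : (g 0).1 ≠ (g 0).2 := hab.ne
  have hval : ∀ a b w : V, edgeExp (a, b) w
      = (if a = w then 1 else 0) + (if b = w then 1 else 0) := by
    intro a b w
    rw [edgeExp, Finsupp.add_apply, Finsupp.single_apply, Finsupp.single_apply]
  have hvalg : ∀ w : V, edgeExp (g 0) w
      = (if (g 0).1 = w then 1 else 0) + (if (g 0).2 = w then 1 else 0) := by
    intro w
    rw [show edgeExp (g 0) = edgeExp ((g 0).1, (g 0).2) from rfl, hval]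
  have ha : u = (g 0).1 ∨ v = (g 0).1 := by
    have h1 := hdle (g 0).1
    rw [hvalg, hval] at h1
    by_contra hcon
    push_neg at hcon
    rw [if_pos rfl, if_neg hcon.1, if_neg hcon.2] at h1
    split_ifs at h1 <;> omega
  have hb : u = (g 0).2 ∨ v = (g 0).2 := by
    have h1 := hdle (g 0).2
    rw [hvalg, hval] at h1
    by_contra hcon
    push_neg at hcon
    rw [if_pos rfl, if_neg hcon.1, if_neg hcon.2] at h1
    split_ifs at h1 <;> omega
  rcases ha with ha | ha <;> rcases hb with hb | hb
  · exact absurd (ha.symm.trans hb) hne'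
  · rw [ha, hb]; exact hab
  · rw [ha, hb]; exact hab.symm
  · exact absurd (ha.symm.trans hb) hne'

end Membership

section GraphAux

variable {V : Type} [DecidableEq V]

lemma cyc_adj_val {m : ℕ} {u v : Fin (m + 2)} (h : u - v = 1) :
    u.val = v.val + 1 ∨ (v.val = m + 1 ∧ u.val = 0) := by
  have hv := v.isLt
  have h' : u = v + 1 := by
    rw [sub_eq_iff_eq_add] at h
    rw [h]
    exact add_comm 1 v
  have hval : u.val = (v.val + 1) % (m + 2) := by
    rw [h', Fin.val_add, Fin.val_one]
  rcases Nat.lt_or_ge (v.val + 1) (m + 2) with hlt | hge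
  · left; rw [hval, Nat.mod_eq_of_lt hlt]
  · right
    have hv1 : v.val = m + 1 := by omega
    refine ⟨hv1, ?_⟩
    rw [hval, hv1, show m + 1 + 1 = m + 2 from rfl, Nat.mod_self]

lemma cycleGraph_triangle_free {n : ℕ} (hn : 4 ≤ n) {i j l : Fin n}
    (hij : (SimpleGraph.cycleGraph n).Adj i j) (hjl : (SimpleGraph.cycleGraph n).Adj j l)
    (hil : (SimpleGraph.cycleGraph n).Adj i l) : False := by
  obtain ⟨m, rfl⟩ : ∃ m, n = m + 2 := ⟨n - 2, by omega⟩
  rw [SimpleGraph.cycleGraph_adj] at hij hjl hil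
  have H1 := hij.imp cyc_adj_val cyc_adj_val
  have H2 := hjl.imp cyc_adj_val cyc_adj_val
  have H3 := hil.imp cyc_adj_val cyc_adj_val
  have b1 := i.isLt
  have b2 := j.isLt
  have b3 := l.isLt
  omega

lemma c4cases : ∀ a b c d : Fin 4, a ≠ b → c ≠ d → a ≠ c → a ≠ d → b ≠ c → b ≠ d →
    (SimpleGraph.cycleGraph 4).Adj a b → (SimpleGraph.cycleGraph 4).Adj c d →
    ((SimpleGraph.cycleGraph 4).Adj a d ∧ (SimpleGraph.cycleGraph 4).Adj b c ∧
      ¬(SimpleGraph.cycleGraph 4).Adj a c ∧ ¬(SimpleGraph.cycleGraph 4).Adj b d) ∨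
    ((SimpleGraph.cycleGraph 4).Adj a c ∧ (SimpleGraph.cycleGraph 4).Adj b d ∧
      ¬(SimpleGraph.cycleGraph 4).Adj a d ∧ ¬(SimpleGraph.cycleGraph 4).Adj b c) := by
  decide

lemma three_distinct {α : Type} [DecidableEq α] {s : Finset α} (h : 3 ≤ s.card) :
    ∃ a b c, a ∈ s ∧ b ∈ s ∧ c ∈ s ∧ a ≠ b ∧ b ≠ c ∧ a ≠ c := by
  have h0 : 0 < s.card := by omega
  obtain ⟨a, ha⟩ := Finset.card_pos.mp h0
  have h2 : 0 < (s.erase a).card := by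
    rw [Finset.card_erase_of_mem ha]; omega
  obtain ⟨b, hb'⟩ := Finset.card_pos.mp h2
  have h3 : 0 < ((s.erase a).erase b).card := by
    rw [Finset.card_erase_of_mem hb', Finset.card_erase_of_mem ha]; omega
  obtain ⟨c, hc'⟩ := Finset.card_pos.mp h3
  refine ⟨a, b, c, ha, Finset.mem_of_mem_erase hb',
    Finset.mem_of_mem_erase (Finset.mem_of_mem_erase hc'), ?_, ?_, ?_⟩
  · exact fun h => (Finset.ne_of_mem_erase hb') h.symm
  · exact fun h => (Finset.ne_of_mem_erase hc') h.symm
  · exact fun h => (Finset.ne_of_mem_erase (Finset.mem_of_mem_erase hc')) h.symm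


lemma no2K2_of_cochordal {B : SimpleGraph V} (hch : IsChordal Bᶜ)
    {u u' v v' : V} (huv : B.Adj u v) (hu'v' : B.Adj u' v')
    (huu' : u ≠ u') (hvv' : v ≠ v') (huv'ne : u ≠ v') (hu'vne : u' ≠ v)
    (h1 : ¬B.Adj u u') (h2 : ¬B.Adj v v') (h3 : ¬B.Adj u v') (h4 : ¬B.Adj u' v) : False := by
  have hC := hch 4 (le_refl 4)
  have huvne : u ≠ v := huv.ne
  have hu'v'ne : u' ≠ v' := hu'v'.ne
  have huu'2 : u' ≠ u := huu'.symm
  have hvv'2 : v' ≠ v := hvv'.symm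
  have huv'2 : v' ≠ u := huv'ne.symm
  have hu'v2 : v ≠ u' := hu'vne.symm
  have huvne2 : v ≠ u := huvne.symm
  have hu'v'ne2 : v' ≠ u' := hu'v'ne.symm
  have h1' : ¬B.Adj u' u := fun h => h1 h.symm
  have h2' : ¬B.Adj v' v := fun h => h2 h.symm
  have h3' : ¬B.Adj v' u := fun h => h3 h.symm
  have h4' : ¬B.Adj v u' := fun h => h4 h.symm
  have huv2 : B.Adj v u := huv.symm
  have hu'v'2 : B.Adj v' u' := hu'v'.symm
  refine hC.false ⟨⟨![u, u', v, v'], ?_⟩, ?_⟩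
  · intro a b hab
    fin_cases a <;> fin_cases b <;> simp_all
  · intro a b
    show Bᶜ.Adj _ _ ↔ _
    simp only [SimpleGraph.compl_adj]
    fin_cases a <;> fin_cases b <;>
      simp only [Matrix.cons_val_zero, Matrix.cons_val_one, Matrix.head_cons,
        Matrix.cons_val_two, Matrix.tail_cons, Matrix.cons_val_three] <;>
      first
        | exact iff_of_false (fun hh => hh.1 rfl) (by decide)
        | exact iff_of_true ⟨by assumption, by assumption⟩ (by decide)
        | exact iff_of_false (fun hh => hh.2 (by assumption)) (by decide)

set_option linter.unusedSectionVars false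

lemma cochordal_of_cross_no2K2 {B : SimpleGraph V} (X : Finset V)
    (hcr : ∀ a b, B.Adj a b → (a ∈ X ∧ b ∉ X) ∨ (b ∈ X ∧ a ∉ X))
    (h2 : ∀ u u' v v', u ∈ X → u' ∈ X → v ∉ X → v' ∉ X → B.Adj u v → B.Adj u' v' →
      B.Adj u v' ∨ B.Adj u' v) :
    IsChordal Bᶜ := by
  intro n hn
  constructor
  intro φ
  -- same-side vertices are adjacent in the cycle
  have hadj : ∀ a b : Fin n, a ≠ b → (φ a ∈ X ↔ φ b ∈ X) → (SimpleGraph.cycleGraph n).Adj a b := by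
    intro a b hab hiff
    rw [← φ.map_adj_iff]
    rw [SimpleGraph.compl_adj]
    refine ⟨fun h => hab (φ.injective h), fun h => ?_⟩
    rcases hcr _ _ h with ⟨hx, hy⟩ | ⟨hx, hy⟩
    · exact hy (hiff.mp hx)
    · exact hy (hiff.mpr hx)
  have hsame : ∀ a b c : Fin n, a ≠ b → b ≠ c → a ≠ c →
      (φ a ∈ X ↔ φ b ∈ X) → (φ b ∈ X ↔ φ c ∈ X) → False := by
    intro a b c hab hbc hac hab' hbc'
    exact cycleGraph_triangle_free hn (hadj a b hab hab') (hadj b c hbc hbc')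
      (hadj a c hac (hab'.trans hbc'))
  set S := Finset.univ.filter (fun i : Fin n => φ i ∈ X) with hSdef
  set T := Finset.univ.filter (fun i : Fin n => φ i ∉ X) with hTdef
  have hScard : S.card ≤ 2 := by
    by_contra hc
    obtain ⟨a, b, c, ha, hb, hc', hab, hbc, hac⟩ := three_distinct (s := S) (by omega)
    rw [hSdef, Finset.mem_filter] at ha hb hc'
    exact hsame a b c hab hbc hac (iff_of_true ha.2 hb.2) (iff_of_true hb.2 hc'.2)
  have hTcard : T.card ≤ 2 := by
    by_contra hc
    obtain ⟨a, b, c, ha, hb, hc', hab, hbc, hac⟩ := three_distinct (s := T) (by omega)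
    rw [hTdef, Finset.mem_filter] at ha hb hc'
    exact hsame a b c hab hbc hac (iff_of_false ha.2 hb.2) (iff_of_false hb.2 hc'.2)
  have hsum : S.card + T.card = n := by
    rw [hSdef, hTdef]
    rw [Finset.card_filter_add_card_filter_not]
    simp
  have hn4 : n = 4 := by omega
  subst hn4
  have hS2 : S.card = 2 := by omega
  have hT2 : T.card = 2 := by omega
  obtain ⟨a, b, hab, hSeq⟩ := Finset.card_eq_two.mp hS2
  obtain ⟨c, d, hcd, hTeq⟩ := Finset.card_eq_two.mp hT2
  have haX : φ a ∈ X := by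
    have : a ∈ S := by rw [hSeq]; simp
    rw [hSdef, Finset.mem_filter] at this; exact this.2
  have hbX : φ b ∈ X := by
    have : b ∈ S := by rw [hSeq]; simp
    rw [hSdef, Finset.mem_filter] at this; exact this.2
  have hcX : φ c ∉ X := by
    have : c ∈ T := by rw [hTeq]; simp
    rw [hTdef, Finset.mem_filter] at this; exact this.2
  have hdX : φ d ∉ X := by
    have : d ∈ T := by rw [hTeq]; simp
    rw [hTdef, Finset.mem_filter] at this; exact this.2
  have hac : a ≠ c := fun h => hcX (h ▸ haX)
  have had : a ≠ d := fun h => hdX (h ▸ haX)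
  have hbc : b ≠ c := fun h => hcX (h ▸ hbX)
  have hbd : b ≠ d := fun h => hdX (h ▸ hbX)
  have hCab : (SimpleGraph.cycleGraph 4).Adj a b := hadj a b hab (iff_of_true haX hbX)
  have hCcd : (SimpleGraph.cycleGraph 4).Adj c d := hadj c d hcd (iff_of_false hcX hdX)
  -- from cycle adjacency to B facts
  have toB : ∀ i j : Fin 4, i ≠ j → ¬(SimpleGraph.cycleGraph 4).Adj i j → B.Adj (φ i) (φ j) := by
    intro i j hij hcyc
    by_contra hB
    exact hcyc ((φ.map_adj_iff).mp ((SimpleGraph.compl_adj _ _ _).mpr ⟨fun h => hij (φ.injective h), hB⟩))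
  have notB : ∀ i j : Fin 4, (SimpleGraph.cycleGraph 4).Adj i j → ¬B.Adj (φ i) (φ j) := by
    intro i j hcyc hB
    exact ((SimpleGraph.compl_adj _ _ _).mp ((φ.map_adj_iff).mpr hcyc)).2 hB
  rcases c4cases a b c d hab hcd hac had hbc hbd hCab hCcd with
    ⟨had', hbc', hacn, hbdn⟩ | ⟨hac', hbd', hadn, hbcn⟩
  · -- B.Adj (φ a) (φ c), B.Adj (φ b) (φ d), not (φ a)(φ d), not (φ b)(φ c)
    have e1 := toB a c hac hacn
    have e2 := toB b d hbd hbdn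
    rcases h2 (φ a) (φ b) (φ c) (φ d) haX hbX hcX hdX e1 e2 with h | h
    · exact notB a d had' h
    · exact notB b c hbc' h
  · have e1 := toB a d had hadn
    have e2 := toB b c hbc hbcn
    rcases h2 (φ a) (φ b) (φ d) (φ c) haX hbX hdX hcX e1 e2 with h | h
    · exact notB a c hac' h
    · exact notB b d hbd' h


end GraphAux

section CoverAux

variable {V : Type} [DecidableEq V]

/-- star subgraph centered at `x` -/
def starG (G : SimpleGraph V) (x : V) : SimpleGraph V :=
  SimpleGraph.fromRel (fun a b => a = x ∧ G.Adj a b)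

lemma starG_le (G : SimpleGraph V) (x : V) : starG G x ≤ G := by
  intro a b h
  rcases h.2 with ⟨_, h'⟩ | ⟨_, h'⟩
  · exact h'
  · exact h'.symm

lemma starG_compl_chordal (G : SimpleGraph V) (x : V) : IsChordal (starG G x)ᶜ := by
  intro n hn
  constructor
  intro φ
  classical
  set good := Finset.univ.filter (fun i : Fin n => φ i ≠ x) with hgood
  have hbadcard : (Finset.univ.filter (fun i : Fin n => φ i = x)).card ≤ 1 := by
    rw [Finset.card_le_one]
    intro a ha b hb
    rw [Finset.mem_filter] at ha hb
    exact φ.injective (ha.2.trans hb.2.symm)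
  have hsplit : (Finset.univ.filter (fun i : Fin n => φ i = x)).card + good.card
      = Fintype.card (Fin n) := by
    rw [hgood, Finset.card_filter_add_card_filter_not, Finset.card_univ]
  have hgc : 3 ≤ good.card := by
    rw [Fintype.card_fin] at hsplit
    omega
  obtain ⟨a, b, c, ha, hb, hc, hab, hbc, hac⟩ := three_distinct hgc
  rw [hgood, Finset.mem_filter] at ha hb hc
  have hadj : ∀ i j : Fin n, i ≠ j → φ i ≠ x → φ j ≠ x →
      (SimpleGraph.cycleGraph n).Adj i j := by
    intro i j hij hi hj
    rw [← φ.map_adj_iff, SimpleGraph.compl_adj]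
    refine ⟨fun h => hij (φ.injective h), fun h => ?_⟩
    rcases h.2 with ⟨h', _⟩ | ⟨h', _⟩
    · exact hi h'
    · exact hj h'
  exact cycleGraph_triangle_free hn (hadj a b hab ha.2 hb.2) (hadj b c hbc hb.2 hc.2)
    (hadj a c hac ha.2 hc.2)

lemma cochord_set_nonempty [Fintype V] (G : SimpleGraph V) :
    ∃ H : Fin (Fintype.card V) → SimpleGraph V,
      (∀ i, H i ≤ G ∧ IsChordal (H i)ᶜ) ∧ (⨆ i, H i) = G := by
  refine ⟨fun i => starG G ((Fintype.equivFin V).symm i),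
    fun i => ⟨starG_le _ _, starG_compl_chordal _ _⟩, ?_⟩
  apply le_antisymm
  · exact iSup_le fun i => starG_le _ _
  · intro a b hab
    rw [SimpleGraph.iSup_adj]
    refine ⟨(Fintype.equivFin V) a, ?_⟩
    have : (Fintype.equivFin V).symm ((Fintype.equivFin V) a) = a := Equiv.symm_apply_apply _ _
    rw [starG, SimpleGraph.fromRel_adj, this]
    exact ⟨hab.ne, Or.inl ⟨rfl, hab⟩⟩

lemma walk_parity {XX YY : Finset V} {G : SimpleGraph V} (hdis : Disjoint XX YY)
    (hcov : ∀ w : V, w ∈ XX ∨ w ∈ YY)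
    (hcross : ∀ a b : V, G.Adj a b → (a ∈ XX ∧ b ∈ YY) ∨ (a ∈ YY ∧ b ∈ XX))
    (p : ℕ → V) (L : ℕ) (hadj : ∀ r, r < L → G.Adj (p r) (p (r + 1))) :
    ∀ r ≤ L, (p r ∈ XX ↔ (Even r ↔ p 0 ∈ XX)) := by
  intro r
  induction r with
  | zero => intro _; simp
  | succ r ih =>
    intro hr
    have hr' := ih (by omega)
    have hadj' := hadj r (by omega)
    have hflip : p (r + 1) ∈ XX ↔ ¬(p r ∈ XX) := by
      rcases hcross _ _ hadj' with ⟨h1, h2⟩ | ⟨h1, h2⟩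
      · exact iff_of_false (Finset.disjoint_right.mp hdis h2) (fun h => h h1)
      · refine iff_of_true h2 (Finset.disjoint_right.mp hdis h1)
    rw [hflip, hr', Nat.even_add_one]
    tauto

end CoverAux

section ColonGraph

variable {V : Type} [DecidableEq V] [Fintype V]

/-- the edges of the `kk`-th cover graph: either an edge of `H`, or an
even-connection walk whose last edge lies in `H`; oriented across `X`. -/
def lastRel (G H : SimpleGraph V) {s : ℕ} (e : Fin s → V × V) (XX : Finset V) (a b : V) : Prop :=
  a ∈ XX ∧ b ∉ XX ∧ (H.Adj a b ∨ ∃ (m : ℕ) (p : ℕ → V), 1 ≤ m ∧ p 0 = a ∧ p (2 * m + 1) = b ∧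
    (∀ r : ℕ, r < 2 * m + 1 → G.Adj (p r) (p (r + 1))) ∧
    (Multiset.map (fun l => Sym2.mk (p (2 * l + 1)) (p (2 * l + 2))) (Multiset.range m)
      ≤ Multiset.map (fun i => Sym2.mk (e i).1 (e i).2) Finset.univ.val) ∧
    H.Adj (p (2 * m)) (p (2 * m + 1)))

def coverG (G H : SimpleGraph V) {s : ℕ} (e : Fin s → V × V) (XX : Finset V) : SimpleGraph V :=
  SimpleGraph.fromRel (lastRel G H e XX)

lemma lastRel_imp {G H : SimpleGraph V} {s : ℕ} {e : Fin s → V × V} {XX : Finset V} {a b : V}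
    (h : lastRel G H e XX a b) : H.Adj a b ∨ WalkCond G e a b := by
  rcases h.2.2 with h' | ⟨m, p, h1, h2, h3, h4, h5, _⟩
  · exact Or.inl h'
  · exact Or.inr ⟨m, p, h1, h2, h3, h4, h5⟩

lemma lastRel_replace {G H : SimpleGraph V} {s : ℕ} {e : Fin s → V × V} {XX YY : Finset V}
    (hdis : Disjoint XX YY) (hcov : ∀ w : V, w ∈ XX ∨ w ∈ YY)
    (hcross : ∀ a b : V, G.Adj a b → (a ∈ XX ∧ b ∈ YY) ∨ (a ∈ YY ∧ b ∈ XX))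
    (hHG : H ≤ G) {a b : V} (h : lastRel G H e XX a b) :
    ∃ c ∈ XX, H.Adj c b ∧ ∀ w, w ∉ XX → H.Adj c w → lastRel G H e XX a w := by
  obtain ⟨haX, hbX, h'⟩ := h
  rcases h' with hH | ⟨m, p, h1, h2, h3, h4, h5, h6⟩
  · exact ⟨a, haX, hH, fun w hw hadj => ⟨haX, hw, Or.inl hadj⟩⟩
  · refine ⟨p (2 * m), ?_, by rwa [h3] at h6, ?_⟩
    · have := walk_parity hdis hcov hcross p (2 * m + 1)
        (fun r hr => h4 r hr) (2 * m) (by omega)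
      rw [this]
      have : Even (2 * m) := even_two_mul m
      rw [h2]
      tauto
    · intro w hw hadj
      refine ⟨haX, hw, Or.inr ⟨m, fun r => if r = 2 * m + 1 then w else p r, h1, ?_, ?_, ?_, ?_, ?_⟩⟩
      all_goals beta_reduce
      · rw [if_neg (by omega)]; exact h2
      · rw [if_pos rfl]
      · intro r hr
        rcases eq_or_ne (r + 1) (2 * m + 1) with he' | hne'
        · rw [if_neg (by omega), if_pos he']
          have : r = 2 * m := by omega
          rw [this]
          exact hHG hadj
        · rw [if_neg (by omega), if_neg hne']
          exact h4 r hr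
      · refine le_trans (le_of_eq (Multiset.map_congr rfl ?_)) h5
        intro l hl
        rw [Multiset.mem_range] at hl
        rw [if_neg (by omega), if_neg (by omega)]
      · rw [if_neg (by omega), if_pos rfl]
        exact hadj

lemma coverG_cross {G H : SimpleGraph V} {s : ℕ} {e : Fin s → V × V} {XX : Finset V} {a b : V}
    (h : (coverG G H e XX).Adj a b) : (a ∈ XX ∧ b ∉ XX) ∨ (b ∈ XX ∧ a ∉ XX) := by
  rcases h.2 with h' | h'
  · exact Or.inl ⟨h'.1, h'.2.1⟩
  · exact Or.inr ⟨h'.1, h'.2.1⟩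

lemma coverG_cochordal {G H : SimpleGraph V} {s : ℕ} {e : Fin s → V × V} {XX YY : Finset V}
    (hdis : Disjoint XX YY) (hcov : ∀ w : V, w ∈ XX ∨ w ∈ YY)
    (hcross : ∀ a b : V, G.Adj a b → (a ∈ XX ∧ b ∈ YY) ∨ (a ∈ YY ∧ b ∈ XX))
    (hHG : H ≤ G) (hch : IsChordal Hᶜ) :
    IsChordal (coverG G H e XX)ᶜ := by
  apply cochordal_of_cross_no2K2 XX (fun a b h => coverG_cross h)
  intro u u' v v' hu hu' hv hv' huv hu'v'
  -- extract lastRel in the correct orientation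
  have huv' : lastRel G H e XX u v := by
    rcases huv.2 with h' | h'
    · exact h'
    · exact absurd h'.1 hv
  have hu'v'' : lastRel G H e XX u' v' := by
    rcases hu'v'.2 with h' | h'
    · exact h'
    · exact absurd h'.1 hv'
  obtain ⟨c, hcX, hcb, hrep⟩ := lastRel_replace hdis hcov hcross hHG huv'
  obtain ⟨c', hc'X, hc'b, hrep'⟩ := lastRel_replace hdis hcov hcross hHG hu'v''
  -- 2K2-freeness of H (crossing version)
  have hkey : H.Adj c v' ∨ H.Adj c' v := by
    rcases eq_or_ne c c' with rfl | hne1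
    · exact Or.inl hc'b
    rcases eq_or_ne v v' with rfl | hne2
    · exact Or.inl hcb
    by_contra hcon
    push_neg at hcon
    have hcv' : c ≠ v' := fun h => hv' (h ▸ hcX)
    have hc'v : c' ≠ v := fun h => hv (h ▸ hc'X)
    have hncc' : ¬H.Adj c c' := by
      intro h
      rcases hcross _ _ (hHG h) with ⟨t1, t2⟩ | ⟨t1, t2⟩
      · exact (Finset.disjoint_right.mp hdis t2) hc'X
      · exact (Finset.disjoint_right.mp hdis t1) hcX
    have hnvv' : ¬H.Adj v v' := by
      intro h
      rcases hcross _ _ (hHG h) with ⟨t1, t2⟩ | ⟨t1, t2⟩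
      · exact hv t1
      · exact hv' t2
    exact no2K2_of_cochordal hch hcb hc'b hne1 hne2 hcv' hc'v hncc' hnvv' hcon.1 hcon.2
  rcases hkey with h | h
  · left
    have := hrep v' hv' h
    exact ⟨fun he' => hv' (he' ▸ hu), Or.inl this⟩
  · right
    have := hrep' v hv h
    exact ⟨fun he' => hv (he' ▸ hu'), Or.inl this⟩

end ColonGraph

end Aux

/-- Let `G` be a bipartite graph and `e 0, …, e (s-1)` (with
`s ≥ 1`) edges of `G`, not necessarily distinct.  Let `G'` be the graph
associated to the colon ideal `(I(G)^(s+1) : e 0 ⋯ e (s-1))` (the simple graph,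
on the same vertex set, whose edge ideal is this colon ideal).  Then
`cochord(G') ≤ cochord(G)`. -/
theorem cochord_colon_le (k : Type) [Field k] {V : Type} [Fintype V] [DecidableEq V]
    (G G' : SimpleGraph V) (hbip : IsBipartite G)
    (s : ℕ) (hs : 1 ≤ s) (e : Fin s → V × V) (he : ∀ i, G.Adj (e i).1 (e i).2)
    (hG' : edgeIdeal k G' =
      Submodule.colon ((edgeIdeal k G) ^ (s + 1))
        (Ideal.span {∏ i, (X (e i).1 * X (e i).2 : MvPolynomial V k)})) :
    cochord G' ≤ cochord G := by
  classical
  obtain ⟨XX, YY, hdis, hcov, hcross⟩ := hbip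
  have hmm : ∀ f : MvPolynomial V k,
      f ∈ Submodule.colon ((edgeIdeal k G) ^ (s + 1))
        (Ideal.span {∏ i, (X (e i).1 * X (e i).2 : MvPolynomial V k)})
      ↔ f * ∏ i, (X (e i).1 * X (e i).2 : MvPolynomial V k) ∈ edgeIdeal k G ^ (s + 1) := by
    intro f
    rw [Submodule.mem_colon]
    constructor
    · intro h
      have := h _ (Ideal.mem_span_singleton_self _)
      rwa [smul_eq_mul] at this
    · intro h p hp
      obtain ⟨r, hr⟩ := Ideal.mem_span_singleton'.mp hp
      rw [smul_eq_mul, ← hr, mul_left_comm]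
      exact Ideal.mul_mem_left _ r h
  have hGle : ∀ a b : V, G.Adj a b → G'.Adj a b := by
    intro a b hab
    refine edge_of_mem_edgeIdeal (k := k) hab.ne ?_
    rw [hG', hmm]
    exact adj_mul_prod_mem he hab
  have hWle : ∀ a b : V, a ≠ b → WalkCond G e a b → G'.Adj a b := by
    intro a b hne hw
    refine edge_of_mem_edgeIdeal (k := k) hne ?_
    rw [hG', hmm]
    exact walk_mul_prod_mem he hw
  have hchar : ∀ a b : V, G'.Adj a b → G.Adj a b ∨ WalkCond G e a b := by
    intro a b hab
    have h1 : (X a * X b : MvPolynomial V k) ∈ edgeIdeal k G' := adj_mem_edgeIdeal hab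
    rw [hG', hmm] at h1
    exact mem_pow_imp he h1
  have hcrossG' : ∀ a b : V, G'.Adj a b → (a ∈ XX ∧ b ∉ XX) ∨ (b ∈ XX ∧ a ∉ XX) := by
    intro a b hab
    rcases hchar a b hab with h | h
    · rcases hcross _ _ h with ⟨t1, t2⟩ | ⟨t1, t2⟩
      · exact Or.inl ⟨t1, Finset.disjoint_right.mp hdis t2⟩
      · exact Or.inr ⟨t2, Finset.disjoint_right.mp hdis t1⟩
    · obtain ⟨m, p, h1, h2, h3, h4, _⟩ := h
      have hp := walk_parity hdis hcov hcross p (2 * m + 1) h4 (2 * m + 1) le_rfl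
      rw [h3, h2] at hp
      have hodd : ¬Even (2 * m + 1) := by
        rw [Nat.even_add_one]
        exact not_not_intro (even_two_mul m)
      rcases hcov a with haX | haY
      · exact Or.inl ⟨haX, fun hbX => hodd ((hp.mp hbX).mpr haX)⟩
      · have haX : a ∉ XX := Finset.disjoint_right.mp hdis haY
        refine Or.inr ⟨?_, haX⟩
        exact hp.mpr ⟨fun hev => absurd hev hodd, fun hax => absurd hax haX⟩
  have hne0 : {n : ℕ | ∃ H : Fin n → SimpleGraph V,
      (∀ i, H i ≤ G ∧ IsChordal (H i)ᶜ) ∧ (⨆ i, H i) = G}.Nonempty :=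
    ⟨Fintype.card V, cochord_set_nonempty G⟩
  obtain ⟨H, hHprop, hHsup⟩ := Nat.sInf_mem hne0
  have hcovle : ∀ kk, coverG G (H kk) e XX ≤ G' := by
    intro kk a b hab
    rcases hab.2 with h' | h'
    · rcases lastRel_imp h' with hH | hW
      · exact hGle a b ((hHprop kk).1 hH)
      · exact hWle a b hab.1 hW
    · rcases lastRel_imp h' with hH | hW
      · exact (hGle b a ((hHprop kk).1 hH)).symm
      · exact (hWle b a (Ne.symm hab.1) hW).symm
  apply Nat.sInf_le
  refine ⟨fun kk => coverG G (H kk) e XX, fun kk =>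
    ⟨hcovle kk, coverG_cochordal hdis hcov hcross (hHprop kk).1 (hHprop kk).2⟩, ?_⟩
  apply le_antisymm
  · exact iSup_le hcovle
  · intro a b hab
    rw [SimpleGraph.iSup_adj]
    have main : ∀ a b : V, G'.Adj a b → a ∈ XX → b ∉ XX →
        ∃ kk, lastRel G (H kk) e XX a b := by
      intro a b hab haX hbX
      rcases hchar a b hab with h | h
      · have hsup : (⨆ i, H i).Adj a b := by rw [hHsup]; exact h
        rw [SimpleGraph.iSup_adj] at hsup
        obtain ⟨kk, hk⟩ := hsup
        exact ⟨kk, haX, hbX, Or.inl hk⟩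
      · obtain ⟨m, p, h1, h2, h3, h4, h5⟩ := h
        have hlast : G.Adj (p (2 * m)) (p (2 * m + 1)) := h4 (2 * m) (by omega)
        have hsup : (⨆ i, H i).Adj (p (2 * m)) (p (2 * m + 1)) := by
          rw [hHsup]; exact hlast
        rw [SimpleGraph.iSup_adj] at hsup
        obtain ⟨kk, hk⟩ := hsup
        exact ⟨kk, haX, hbX, Or.inr ⟨m, p, h1, h2, h3, h4, h5, hk⟩⟩
    rcases hcrossG' a b hab with ⟨h1, h2⟩ | ⟨h1, h2⟩
    · obtain ⟨kk, hk⟩ := main a b hab h1 h2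
      exact ⟨kk, fun hE => h2 (hE ▸ h1), Or.inl hk⟩
    · obtain ⟨kk, hk⟩ := main b a hab.symm h1 h2
      exact ⟨kk, fun hE => h2 (hE.symm ▸ h1), Or.inr hk⟩

end RegPowers
end

section
/- For any finite simple graph G, cochord(G) ≤ β(G), where β(G) is the minimum matching number of G. (Explicitly: if {z_1,…,z_t} is a minimum maximal matching of G and Z_i is the subgraph of G whose edges are z_i together with all edges of G adjacent to z_i, then each Z_i is a co-chordal subgraph of G and E(G) = E(Z_1) ∪ … ∪ E(Z_t).) -/
/-!
Common definitions: edge ideals, Castelnuovo–Mumford regularity (via graded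
free resolutions), chordal/co-chordal graphs, co-chordal cover number,
induced matchings, matchings, vertex covers, even-connections and the
polarized colon graph.
-/

open MvPolynomial

namespace RegPowers

/-- The subgraph `Z_e` of `G` whose edges are `e` together with all edges of `G`
adjacent to `e`. -/
def matchEdgeStar {V : Type} (G : SimpleGraph V) (e : Sym2 V) : SimpleGraph V :=
  SimpleGraph.fromRel fun u v => G.Adj u v ∧ (u ∈ e ∨ v ∈ e)


lemma cyc_adj {n x y : ℕ} (hx : x < n) (hy : y < n) (h : x < y) :
    (SimpleGraph.cycleGraph n).Adj ⟨x, hx⟩ ⟨y, hy⟩ ↔ (y - x = 1 ∨ y - x = n - 1) := by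
  rw [SimpleGraph.cycleGraph_adj']
  have h1 : ((⟨x, hx⟩ - ⟨y, hy⟩ : Fin n)).val = n - (y - x) := by
    rw [Fin.sub_def]
    show (n - y + x) % n = n - (y - x)
    rw [Nat.mod_eq_of_lt (by omega)]; omega
  have h2 : ((⟨y, hy⟩ - ⟨x, hx⟩ : Fin n)).val = y - x := by
    rw [Fin.sub_def]
    show (n - x + y) % n = y - x
    have e : n - x + y = n + (y - x) := by omega
    rw [e, Nat.add_mod_left, Nat.mod_eq_of_lt (by omega)]
  rw [h1, h2]; omega

lemma star_le {V : Type} (G : SimpleGraph V) (e : Sym2 V) : matchEdgeStar G e ≤ G := by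
  intro u v h
  rw [matchEdgeStar, SimpleGraph.fromRel_adj] at h
  rcases h.2 with ⟨h', _⟩ | ⟨h', _⟩
  · exact h'
  · exact h'.symm

lemma star_cochordal {V : Type} (G : SimpleGraph V) {a b : V} (hab : G.Adj a b) :
    IsChordal (matchEdgeStar G s(a, b))ᶜ := by
  intro n hn
  constructor
  intro f
  set Z := matchEdgeStar G s(a, b) with hZ
  have hZab : Z.Adj a b := by
    rw [hZ, matchEdgeStar, SimpleGraph.fromRel_adj]
    exact ⟨hab.ne, Or.inl ⟨hab, Or.inl (Sym2.mem_mk_left a b)⟩⟩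
  have key : ∀ u v : V, Z.Adj u v → (u = a ∨ u = b) ∨ (v = a ∨ v = b) := by
    intro u v h
    rw [hZ, matchEdgeStar, SimpleGraph.fromRel_adj] at h
    rcases h.2 with ⟨_, h2⟩ | ⟨_, h2⟩
    · rcases h2 with h2 | h2
      · exact Or.inl (Sym2.mem_iff.mp h2)
      · exact Or.inr (Sym2.mem_iff.mp h2)
    · rcases h2 with h2 | h2
      · exact Or.inr (Sym2.mem_iff.mp h2)
      · exact Or.inl (Sym2.mem_iff.mp h2)
  have fact1 : ∀ i j : Fin n, i ≠ j → ¬(SimpleGraph.cycleGraph n).Adj i j →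
      (f i = a ∨ f i = b) ∨ (f j = a ∨ f j = b) := by
    intro i j hij hadj
    by_contra hc
    push_neg at hc
    apply hadj
    rw [← f.map_rel_iff, SimpleGraph.compl_adj]
    refine ⟨fun h => hij (f.injective h), fun h => ?_⟩
    rcases key _ _ h with h' | h'
    · rcases h' with h' | h'
      · exact hc.1.1 h'
      · exact hc.1.2 h'
    · rcases h' with h' | h'
      · exact hc.2.1 h'
      · exact hc.2.2 h'
  have fact2 : ∀ i j : Fin n, (SimpleGraph.cycleGraph n).Adj i j →
      (f i = a ∨ f i = b) → (f j = a ∨ f j = b) → False := by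
    intro i j hadj hi hj
    have hadj' : Zᶜ.Adj (f i) (f j) := f.map_rel_iff.mpr hadj
    rw [SimpleGraph.compl_adj] at hadj'
    rcases hi with hi | hi <;> rcases hj with hj | hj
    · exact hadj'.1 (hi.trans hj.symm)
    · exact hadj'.2 (by rw [hi, hj]; exact hZab)
    · exact hadj'.2 (by rw [hi, hj]; exact hZab.symm)
    · exact hadj'.1 (hi.trans hj.symm)
  have h0 : (0 : ℕ) < n := by omega
  have h1 : (1 : ℕ) < n := by omega
  have h2 : (2 : ℕ) < n := by omega
  have h3 : (3 : ℕ) < n := by omega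
  have adj01 : (SimpleGraph.cycleGraph n).Adj ⟨0, h0⟩ ⟨1, h1⟩ :=
    (cyc_adj h0 h1 (by omega)).mpr (Or.inl rfl)
  have adj12 : (SimpleGraph.cycleGraph n).Adj ⟨1, h1⟩ ⟨2, h2⟩ :=
    (cyc_adj h1 h2 (by omega)).mpr (Or.inl rfl)
  have adj23 : (SimpleGraph.cycleGraph n).Adj ⟨2, h2⟩ ⟨3, h3⟩ :=
    (cyc_adj h2 h3 (by omega)).mpr (Or.inl rfl)
  have nadj02 : ¬(SimpleGraph.cycleGraph n).Adj ⟨0, h0⟩ ⟨2, h2⟩ := by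
    rw [cyc_adj h0 h2 (by omega)]; omega
  have nadj13 : ¬(SimpleGraph.cycleGraph n).Adj ⟨1, h1⟩ ⟨3, h3⟩ := by
    rw [cyc_adj h1 h3 (by omega)]; omega
  have hs1 := fact1 _ _ (by simp) nadj02
  have hs2 := fact1 _ _ (by simp) nadj13
  have hspec3 : f ⟨3, h3⟩ = a ∨ f ⟨3, h3⟩ = b := by
    rcases hs2 with h | h
    · exfalso
      rcases hs1 with h' | h'
      · exact fact2 _ _ adj01 h' h
      · exact fact2 _ _ adj12 h h'
    · exact h
  have hspec0 : f ⟨0, h0⟩ = a ∨ f ⟨0, h0⟩ = b := by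
    rcases hs1 with h | h
    · exact h
    · exact absurd hspec3 (fun h' => fact2 _ _ adj23 h h')
  rcases Nat.lt_or_ge n 5 with h5 | h5
  · have adj03 : (SimpleGraph.cycleGraph n).Adj ⟨0, h0⟩ ⟨3, h3⟩ :=
      (cyc_adj h0 h3 (by omega)).mpr (Or.inr (by omega))
    exact fact2 _ _ adj03 hspec0 hspec3
  · have h4 : (4 : ℕ) < n := by omega
    have nadj14 : ¬(SimpleGraph.cycleGraph n).Adj ⟨1, h1⟩ ⟨4, h4⟩ := by
      rw [cyc_adj h1 h4 (by omega)]; omega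
    have hs3 := fact1 _ _ (by simp) nadj14
    have hspec4 : f ⟨4, h4⟩ = a ∨ f ⟨4, h4⟩ = b := by
      rcases hs3 with h | h
      · exact absurd hspec0 (fun h' => fact2 _ _ adj01 h' h)
      · exact h
    have d03 : f ⟨0, h0⟩ ≠ f ⟨3, h3⟩ := fun h => by
      have := f.injective h; simp [Fin.ext_iff] at this
    have d04 : f ⟨0, h0⟩ ≠ f ⟨4, h4⟩ := fun h => by
      have := f.injective h; simp [Fin.ext_iff] at this
    have d34 : f ⟨3, h3⟩ ≠ f ⟨4, h4⟩ := fun h => by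
      have := f.injective h; simp [Fin.ext_iff] at this
    rcases hspec0 with h | h <;> rcases hspec3 with h' | h' <;> rcases hspec4 with h'' | h'' <;>
      first
        | exact d03 (h.trans h'.symm)
        | exact d04 (h.trans h''.symm)
        | exact d34 (h'.trans h''.symm)

lemma exists_maximalMatching {V : Type} [Fintype V] [DecidableEq V] (G : SimpleGraph V) :
    ∃ M : Finset (Sym2 V), IsMaximalMatching G M := by
  have hfin : Set.Finite {M : Finset (Sym2 V) | ↑M ⊆ G.edgeSet ∧
      (M : Set (Sym2 V)).Pairwise fun e f => ∀ x : V, x ∈ e → x ∉ f} := Set.toFinite _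
  obtain ⟨M, hM, hmax⟩ := Set.Finite.exists_maximalFor Finset.card _ hfin ⟨∅, by simp, by simp⟩
  refine ⟨M, hM.1, hM.2, ?_⟩
  intro e he
  by_contra hc
  push_neg at hc
  have heM : e ∉ M := by
    intro h
    induction e using Sym2.ind with
    | _ u v => exact hc _ h u (Sym2.mem_mk_left u v) (Sym2.mem_mk_left u v)
  have hM' : insert e M ∈ {M : Finset (Sym2 V) | ↑M ⊆ G.edgeSet ∧
      (M : Set (Sym2 V)).Pairwise fun e f => ∀ x : V, x ∈ e → x ∉ f} := by
    constructor
    · rw [Finset.coe_insert]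
      exact Set.insert_subset he hM.1
    · rw [Finset.coe_insert, Set.pairwise_insert]
      refine ⟨hM.2, fun g hg _ => ⟨fun x hx => hc g hg x hx, fun x hx hx' => hc g hg x hx' hx⟩⟩
  have := hmax hM' (by rw [Finset.card_insert_of_notMem heM]; omega)
  rw [Finset.card_insert_of_notMem heM] at this
  omega

/-- For any finite simple graph `G`, `cochord(G) ≤ β(G)`, the
minimum matching number of `G`.  Explicitly: if `M` is a maximal matching of `G`
and, for `e ∈ M`, `Z_e` is the subgraph of `G` whose edges are `e` together with
all edges of `G` adjacent to `e`, then each `Z_e` is a co-chordal subgraph of `G`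
and the edge sets of the `Z_e` cover the edge set of `G`. -/
theorem cochord_le_minMatchingNumber {V : Type} [Fintype V] [DecidableEq V]
    (G : SimpleGraph V) :
    cochord G ≤ minMatchingNumber G ∧
    ∀ M : Finset (Sym2 V), IsMaximalMatching G M →
      (∀ e ∈ M, matchEdgeStar G e ≤ G ∧ IsChordal (matchEdgeStar G e)ᶜ) ∧
      (⨆ e ∈ M, matchEdgeStar G e) = G := by
  have main2 : ∀ M : Finset (Sym2 V), IsMaximalMatching G M →
      (∀ e ∈ M, matchEdgeStar G e ≤ G ∧ IsChordal (matchEdgeStar G e)ᶜ) ∧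
      (⨆ e ∈ M, matchEdgeStar G e) = G := by
    intro M hM
    constructor
    · intro e he
      have heE : e ∈ G.edgeSet := hM.1 he
      refine ⟨star_le G e, ?_⟩
      induction e using Sym2.ind with
      | _ u v =>
        rw [SimpleGraph.mem_edgeSet] at heE
        exact star_cochordal G heE
    · ext u v
      simp only [SimpleGraph.iSup_adj]
      constructor
      · rintro ⟨e, _, hadj⟩
        exact star_le G e hadj
      · intro h
        obtain ⟨g, hg, x, hxe, hxg⟩ := hM.2.2 s(u, v) ((SimpleGraph.mem_edgeSet G).mpr h)
        refine ⟨g, hg, ?_⟩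
        rw [matchEdgeStar, SimpleGraph.fromRel_adj]
        refine ⟨h.ne, Or.inl ⟨h, ?_⟩⟩
        rcases Sym2.mem_iff.mp hxe with rfl | rfl
        · exact Or.inl hxg
        · exact Or.inr hxg
  refine ⟨?_, main2⟩
  obtain ⟨M0, hM0⟩ := exists_maximalMatching G
  have hne : {k : ℕ | ∃ M : Finset (Sym2 V), IsMaximalMatching G M ∧ M.card = k}.Nonempty :=
    ⟨M0.card, M0, hM0, rfl⟩
  obtain ⟨M, hM, hcard⟩ := Nat.sInf_mem hne
  have hle : cochord G ≤ M.card := by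
    apply Nat.sInf_le
    refine ⟨fun i => matchEdgeStar G ((M.equivFin.symm i : { x // x ∈ M }) : Sym2 V), ?_, ?_⟩
    · intro i
      exact (main2 M hM).1 _ (M.equivFin.symm i).2
    · ext u v
      rw [SimpleGraph.iSup_adj]
      constructor
      · rintro ⟨i, hadj⟩
        exact star_le G _ hadj
      · intro h
        obtain ⟨g, hg, x, hxe, hxg⟩ := hM.2.2 s(u, v) ((SimpleGraph.mem_edgeSet G).mpr h)
        refine ⟨M.equivFin ⟨g, hg⟩, ?_⟩
        rw [Equiv.symm_apply_apply]
        rw [matchEdgeStar, SimpleGraph.fromRel_adj]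
        refine ⟨h.ne, Or.inl ⟨h, ?_⟩⟩
        rcases Sym2.mem_iff.mp hxe with rfl | rfl
        · exact Or.inl hxg
        · exact Or.inr hxg
  exact hle.trans_eq hcard


end RegPowers
end
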